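/- arXiv:2009.10276 — 13 statements merged into one kernel-verified Lean document; each statement's English description precedes it below -/
import Mathlib

section
/- Let A be a positive definite operator on a Hilbert space with mI ≤ A ≤ MI for constants 0 < m ≤ M, and let Ψ be a positive unital linear map. Then for every t > 0, Ψ(A) ≤ t·Ψ(A⁻¹)⁻¹ + ρ_{M,m}(t)·I, where ρ_{M,m}(t) = (1−t)m if t ≥ M/m, ρ_{M,m}(t) = M + m − 2√(tMm) if m/M ≤ t ≤ M/m, and ρ_{M,m}(t) = (1−t)M if t ≤ m/M. -/
open ContinuousLinearMap in
/-- A positive definite (positive invertible) bounded operator on a Hilbert space. -/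
def IsPosDef {H : Type*} [NormedAddCommGroup H] [InnerProductSpace ℂ H] [CompleteSpace H]
    (A : H →L[ℂ] H) : Prop := A.IsPositive ∧ IsUnit A

/-- A positive probability vector. -/
def IsProbVec {n : ℕ} (w : Fin n → ℝ) : Prop := (∀ i, 0 < w i) ∧ ∑ i, w i = 1

/-- An ordered mean: a family of weighted means of positive definite operators satisfying
homogeneity, monotonicity, joint concavity and the arithmetic-`G`-harmonic mean inequalities
with respect to the Loewner order. -/
structure OrderedMean (H : Type*) [NormedAddCommGroup H] [InnerProductSpace ℂ H]
    [CompleteSpace H] where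
  G : ∀ n : ℕ, (Fin n → ℝ) → (Fin n → (H →L[ℂ] H)) → (H →L[ℂ] H)
  posDef : ∀ n w A, IsProbVec w → (∀ i, IsPosDef (A i)) → IsPosDef (G n w A)
  homog : ∀ n w A (a : ℝ), IsProbVec w → (∀ i, IsPosDef (A i)) → 0 < a →
    G n w (fun i => a • A i) = a • G n w A
  mono : ∀ n w A B, IsProbVec w → (∀ i, IsPosDef (A i)) → (∀ i, IsPosDef (B i)) →
    (∀ i, B i ≤ A i) → G n w B ≤ G n w A
  concave : ∀ n w A B (s : ℝ), IsProbVec w → (∀ i, IsPosDef (A i)) → (∀ i, IsPosDef (B i)) →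
    0 ≤ s → s ≤ 1 →
    (1 - s) • G n w A + s • G n w B ≤ G n w (fun i => (1 - s) • A i + s • B i)
  harm_le : ∀ n w A, IsProbVec w → (∀ i, IsPosDef (A i)) →
    Ring.inverse (∑ i, w i • Ring.inverse (A i)) ≤ G n w A
  le_arith : ∀ n w A, IsProbVec w → (∀ i, IsPosDef (A i)) →
    G n w A ≤ ∑ i, w i • A i

/-- The parameterized ordered mean `G^μ`. -/
noncomputable def OrderedMean.pMean {H : Type*} [NormedAddCommGroup H] [InnerProductSpace ℂ H]
    [CompleteSpace H] (G : OrderedMean H) (μ : ℝ) (n : ℕ) (w : Fin n → ℝ)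
    (A : Fin n → (H →L[ℂ] H)) : H →L[ℂ] H :=
  if 0 ≤ μ then G.G n w (fun i => A i + μ • 1) - μ • 1
  else Ring.inverse (G.G n w (fun i => Ring.inverse (A i) + (-μ) • 1) - (-μ) • 1)

/-- The constant `ρ_{M,m}(t)`. -/
noncomputable def rhoConst (M m t : ℝ) : ℝ :=
  if M / m ≤ t then (1 - t) * m
  else if t ≤ m / M then (1 - t) * M
  else M + m - 2 * Real.sqrt (t * M * m)

variable {H : Type*} [NormedAddCommGroup H] [InnerProductSpace ℂ H] [CompleteSpace H]

set_option maxHeartbeats 1000000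
set_option synthInstance.maxHeartbeats 200000

private lemma aux_rsmul_nonneg {B : H →L[ℂ] H} (hB : 0 ≤ B) {r : ℝ} (hr : 0 ≤ r) :
    0 ≤ r • B := by
  have h := star_left_conjugate_nonneg hB (Real.sqrt r • (1 : H →L[ℂ] H))
  rwa [star_smul, star_one, star_trivial, smul_mul_assoc, one_mul, mul_smul_comm, mul_one,
    smul_smul, Real.mul_self_sqrt hr] at h

private lemma aux_rsmul_mono {B C : H →L[ℂ] H} (h : B ≤ C) {r : ℝ} (hr : 0 ≤ r) :
    r • B ≤ r • C := by
  rw [← sub_nonneg, ← smul_sub]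
  exact aux_rsmul_nonneg (sub_nonneg.mpr h) hr

theorem psi_reverse_bound (Ψ : (H →L[ℂ] H) →ₗ[ℂ] (H →L[ℂ] H))
    (hΨ1 : Ψ 1 = 1) (hΨpos : ∀ B : H →L[ℂ] H, 0 ≤ B → 0 ≤ Ψ B)
    (A : H →L[ℂ] H) (hA : IsPosDef A) (m M : ℝ) (hm : 0 < m) (hmM : m ≤ M)
    (hlow : m • (1 : H →L[ℂ] H) ≤ A) (hup : A ≤ M • (1 : H →L[ℂ] H))
    (t : ℝ) (ht : 0 < t) :
    Ψ A ≤ t • Ring.inverse (Ψ (Ring.inverse A)) + rhoConst M m t • (1 : H →L[ℂ] H) := by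
  obtain ⟨hApos, hAu⟩ := hA
  have hM0 : (0 : ℝ) < M := lt_of_lt_of_le hm hmM
  have hA_sa : IsSelfAdjoint A := hApos.isSelfAdjoint
  have hone : (0 : H →L[ℂ] H) ≤ 1 :=
    (ContinuousLinearMap.nonneg_iff_isPositive _).mpr ContinuousLinearMap.isPositive_one
  have hΨr : ∀ (r : ℝ) (B : H →L[ℂ] H), Ψ (r • B) = r • Ψ B :=
    fun r B => map_smul (Ψ.restrictScalars ℝ) r B
  have hΨmono : ∀ {B C : H →L[ℂ] H}, B ≤ C → Ψ B ≤ Ψ C := by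
    intro B C h
    have h2 := hΨpos _ (sub_nonneg.mpr h)
    rw [map_sub] at h2
    exact sub_nonneg.mp h2
  -- spectrum bounds
  have hspec_le : ∀ x ∈ spectrum ℝ A, x ≤ M := by
    rw [← Algebra.algebraMap_eq_smul_one] at hup
    exact fun x hx => (le_algebraMap_iff_spectrum_le (R := ℝ) hA_sa).mp hup x hx
  have hspec_ge : ∀ x ∈ spectrum ℝ A, m ≤ x := by
    rw [← Algebra.algebraMap_eq_smul_one] at hlow
    exact fun x hx => (algebraMap_le_iff_le_spectrum (R := ℝ) hA_sa).mp hlow x hx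
  have hspec_pos : ∀ x ∈ spectrum ℝ A, (0 : ℝ) < x := fun x hx => lt_of_lt_of_le hm (hspec_ge x hx)
  have hcont : ContinuousOn (fun x : ℝ => x⁻¹) (spectrum ℝ A) :=
    ContinuousOn.inv₀ continuousOn_id fun x hx => ne_of_gt (hspec_pos x hx)
  have hu_sa : IsSelfAdjoint (hAu.unit : H →L[ℂ] H) := by rwa [hAu.unit_spec]
  have hinv_cfc : Ring.inverse A = cfc (fun x : ℝ => x⁻¹) A := by
    have h := cfc_inv_id (R := ℝ) hAu.unit hu_sa
    rw [hAu.unit_spec] at h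
    rw [h]
    conv_lhs => rw [← hAu.unit_spec]
    exact Ring.inverse_unit _
  -- key operator inequalities from the functional calculus
  have key1 : A + (m * M) • Ring.inverse A ≤ (m + M) • 1 := by
    rw [hinv_cfc, ← Algebra.algebraMap_eq_smul_one]
    have hmul : ContinuousOn (fun x : ℝ => (m * M) * x⁻¹) (spectrum ℝ A) :=
      continuousOn_const.mul hcont
    have hrw : A + (m * M) • cfc (fun x : ℝ => x⁻¹) A
        = cfc (fun x : ℝ => x + (m * M) * x⁻¹) A := by
      have hadd := cfc_add A (fun x : ℝ => x) (fun x : ℝ => (m * M) * x⁻¹)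
        continuousOn_id hmul
      have hmulc := cfc_const_mul (m * M) (fun x : ℝ => x⁻¹) A hcont
      rw [hadd, hmulc, cfc_id' ℝ A]
    rw [hrw]
    refine (cfc_le_algebraMap_iff _ _ _ (continuousOn_id.add hmul)
      hA_sa).mpr fun x hx => ?_
    have hx0 : (0 : ℝ) < x := hspec_pos x hx
    have h1 : (0 : ℝ) ≤ (x - m) * (M - x) :=
      mul_nonneg (by linarith [hspec_ge x hx]) (by linarith [hspec_le x hx])
    have h2 : (0 : ℝ) ≤ (x - m) * (M - x) / x := div_nonneg h1 hx0.le
    have h3 : x + m * M * x⁻¹ = m + M - (x - m) * (M - x) / x := by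
      field_simp
      ring
    simp only [Pi.add_apply, id_eq]
    linarith
  have key2 : Ring.inverse A ≤ m⁻¹ • 1 := by
    rw [hinv_cfc, ← Algebra.algebraMap_eq_smul_one]
    exact (cfc_le_algebraMap_iff _ _ _ hcont hA_sa).mpr fun x hx =>
      inv_anti₀ hm (hspec_ge x hx)
  have key3 : M⁻¹ • (1 : H →L[ℂ] H) ≤ Ring.inverse A := by
    rw [hinv_cfc, ← Algebra.algebraMap_eq_smul_one]
    exact (algebraMap_le_cfc_iff _ _ _ hcont hA_sa).mpr fun x hx =>
      inv_anti₀ (hspec_pos x hx) (hspec_le x hx)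
  set X := Ψ (Ring.inverse A) with hXdef
  have hXlow : M⁻¹ • (1 : H →L[ℂ] H) ≤ X := by
    have h := hΨmono key3
    rwa [hΨr, hΨ1] at h
  have hXup : X ≤ m⁻¹ • (1 : H →L[ℂ] H) := by
    have h := hΨmono key2
    rwa [hΨr, hΨ1] at h
  have hXpos : 0 ≤ X :=
    le_trans (aux_rsmul_nonneg hone (by positivity)) hXlow
  have hXsa : IsSelfAdjoint X := IsSelfAdjoint.of_nonneg hXpos
  have hXu : IsUnit X := by
    refine CStarAlgebra.isUnit_of_le _ hXlow
      ((fun hu h0 => IsStrictlyPositive.iff_of_unital.mpr ⟨h0, hu⟩) ?_ ?_)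
    · rw [← Algebra.algebraMap_eq_smul_one]
      exact IsUnit.map (algebraMap ℝ (H →L[ℂ] H)) (isUnit_iff_ne_zero.mpr (by positivity))
    · exact aux_rsmul_nonneg hone (by positivity)
  have hXRnn : 0 ≤ Ring.inverse X := by
    have h := CFC.inv_nonneg_of_nonneg hXu.unit (by rwa [hXu.unit_spec])
    rwa [← Ring.inverse_unit, hXu.unit_spec] at h
  have hXR1 : X * Ring.inverse X = 1 := Ring.mul_inverse_cancel _ hXu
  have hX1R : Ring.inverse X * X = 1 := Ring.inverse_mul_cancel _ hXu
  have hPsiA : Ψ A ≤ (m + M) • 1 - (m * M) • X := by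
    have h := hΨmono key1
    rw [map_add, hΨr, hΨr, hΨ1] at h
    calc Ψ A = (Ψ A + (m * M) • X) - (m * M) • X := by abel
    _ ≤ (m + M) • 1 - (m * M) • X := sub_le_sub_right h _
  have hconj : ∀ l : ℝ, (2 * l) • (1 : H →L[ℂ] H) - (l ^ 2) • X ≤ Ring.inverse X := by
    intro l
    have hc : IsSelfAdjoint ((1 : H →L[ℂ] H) - l • X) := by
      rw [IsSelfAdjoint, star_sub, star_one, star_smul, star_trivial, hXsa.star_eq]
    have hid : ((1 : H →L[ℂ] H) - l • X) * Ring.inverse X * ((1 : H →L[ℂ] H) - l • X)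
        = Ring.inverse X - (2 * l) • 1 + (l ^ 2) • X := by
      simp only [mul_sub, sub_mul, one_mul, mul_one, smul_mul_assoc, mul_smul_comm,
        hXR1, hX1R, smul_smul]
      module
    have h0 : 0 ≤ Ring.inverse X - (2 * l) • 1 + (l ^ 2) • X := by
      rw [← hid]
      have h := star_left_conjugate_nonneg hXRnn ((1 : H →L[ℂ] H) - l • X)
      rwa [hc.star_eq] at h
    rw [← sub_nonneg]
    refine le_of_le_of_eq h0 ?_
    abel
  have hXup' : m • X ≤ 1 := by
    have h := aux_rsmul_mono hXup hm.le
    rwa [smul_smul, mul_inv_cancel₀ (ne_of_gt hm), one_smul] at h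
  have hXlow' : (1 : H →L[ℂ] H) ≤ M • X := by
    have h := aux_rsmul_mono hXlow hM0.le
    rwa [smul_smul, mul_inv_cancel₀ (ne_of_gt hM0), one_smul] at h
  unfold rhoConst
  split_ifs with h1 h2
  · -- t ≥ M/m : λ = m
    have hγ : (0 : ℝ) ≤ t * m - M := by
      rw [div_le_iff₀ hm] at h1; linarith
    have hstep : (m + M) • (1 : H →L[ℂ] H) - (m * M) • X
        ≤ t • ((2 * m) • (1 : H →L[ℂ] H) - (m ^ 2) • X) + ((1 - t) * m) • 1 := by
      rw [← sub_nonneg]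
      have hpos : 0 ≤ (t * m - M) • ((1 : H →L[ℂ] H) - m • X) :=
        aux_rsmul_nonneg (sub_nonneg.mpr hXup') hγ
      refine le_of_le_of_eq hpos ?_
      module
    exact hPsiA.trans (hstep.trans (add_le_add_left (aux_rsmul_mono (hconj m) ht.le) _))
  · -- t ≤ m/M : λ = M
    have hγ : (0 : ℝ) ≤ m - t * M := by
      rw [le_div_iff₀ hM0] at h2; linarith
    have hstep : (m + M) • (1 : H →L[ℂ] H) - (m * M) • X
        ≤ t • ((2 * M) • (1 : H →L[ℂ] H) - (M ^ 2) • X) + ((1 - t) * M) • 1 := by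
      rw [← sub_nonneg]
      have hpos : 0 ≤ (m - t * M) • (M • X - (1 : H →L[ℂ] H)) :=
        aux_rsmul_nonneg (sub_nonneg.mpr hXlow') hγ
      refine le_of_le_of_eq hpos ?_
      module
    exact hPsiA.trans (hstep.trans (add_le_add_left (aux_rsmul_mono (hconj M) ht.le) _))
  · -- middle case : λ = √(mM/t)
    set l := Real.sqrt (m * M / t) with hldef
    have hl2 : l ^ 2 = m * M / t := Real.sq_sqrt (by positivity)
    have htl : t * l = Real.sqrt (t * M * m) := by
      rw [hldef, ← Real.sqrt_sq ht.le, ← Real.sqrt_mul (by positivity)]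
      congr 1
      rw [Real.sqrt_sq ht.le]
      field_simp
    have e1 : t * l ^ 2 = m * M := by
      rw [hl2]; field_simp
    have heq : t • ((2 * l) • (1 : H →L[ℂ] H) - (l ^ 2) • X)
        + (M + m - 2 * Real.sqrt (t * M * m)) • 1 = (m + M) • 1 - (m * M) • X := by
      have h' : t • ((2 * l) • (1 : H →L[ℂ] H) - (l ^ 2) • X)
          = (2 * (t * l)) • (1 : H →L[ℂ] H) - (t * l ^ 2) • X := by module
      rw [h', htl, e1]
      module
    calc Ψ A ≤ (m + M) • 1 - (m * M) • X := hPsiA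
    _ = t • ((2 * l) • (1 : H →L[ℂ] H) - (l ^ 2) • X)
        + (M + m - 2 * Real.sqrt (t * M * m)) • 1 := heq.symm
    _ ≤ t • Ring.inverse X + (M + m - 2 * Real.sqrt (t * M * m)) • 1 :=
      add_le_add_left (aux_rsmul_mono (hconj l) ht.le) _
end

section
/- The function f(x) = x − tMm/(M + m − x) on the interval [m, M] (for constants 0 < m ≤ M and t > 0) attains its maximum value ρ_{M,m}(t), where ρ_{M,m}(t) = (1−t)m if t ≥ M/m, ρ_{M,m}(t) = M + m − 2√(tMm) if m/M ≤ t ≤ M/m, and ρ_{M,m}(t) = (1−t)M if t ≤ m/M. -/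
variable {H : Type*} [NormedAddCommGroup H] [InnerProductSpace ℂ H] [CompleteSpace H]

theorem rho_isGreatest (M m t : ℝ) (hm : 0 < m) (hmM : m ≤ M) (ht : 0 < t) :
    IsGreatest ((fun x : ℝ => x - t * M * m / (M + m - x)) '' Set.Icc m M)
      (rhoConst M m t) := by
  have hM : 0 < M := lt_of_lt_of_le hm hmM
  have hc : 0 < t * M * m := by positivity
  have hsq : Real.sqrt (t * M * m) ^ 2 = t * M * m := Real.sq_sqrt hc.le
  have hsqpos : 0 < Real.sqrt (t * M * m) := Real.sqrt_pos.2 hc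
  constructor
  · -- membership
    unfold rhoConst
    split_ifs with h1 h2
    · refine ⟨m, ⟨le_refl m, hmM⟩, ?_⟩
      have hMm : M + m - m = M := by ring
      simp only [hMm]
      field_simp
    · refine ⟨M, ⟨hmM, le_refl M⟩, ?_⟩
      have hMm : M + m - M = m := by ring
      simp only [hMm]
      field_simp
    · push_neg at h1 h2
      -- m/M < t < M/m, so m ≤ √(tMm) ≤ M
      have h1' : t * m < M := (lt_div_iff₀ hm).1 h1
      have h2' : m < t * M := (div_lt_iff₀ hM).1 h2
      have hle1 : Real.sqrt (t * M * m) ≤ M := by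
        calc Real.sqrt (t * M * m) ≤ Real.sqrt (M ^ 2) :=
              Real.sqrt_le_sqrt (by nlinarith)
          _ = M := Real.sqrt_sq hM.le
      have hle2 : m ≤ Real.sqrt (t * M * m) := by
        calc m = Real.sqrt (m ^ 2) := (Real.sqrt_sq hm.le).symm
          _ ≤ Real.sqrt (t * M * m) := Real.sqrt_le_sqrt (by nlinarith)
      refine ⟨M + m - Real.sqrt (t * M * m), ⟨by linarith, by linarith⟩, ?_⟩
      have hs : M + m - (M + m - Real.sqrt (t * M * m)) = Real.sqrt (t * M * m) := by ring
      simp only [hs]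
      have hdiv : t * M * m / Real.sqrt (t * M * m) = Real.sqrt (t * M * m) := by
        rw [div_eq_iff hsqpos.ne']; nlinarith [hsq]
      rw [hdiv]; ring
  · rintro y ⟨x, ⟨hx1, hx2⟩, rfl⟩
    simp only
    set s := M + m - x with hsdef
    have hs0 : 0 < s := by simp only [hsdef]; linarith
    have hsm : m ≤ s := by simp only [hsdef]; linarith
    have hsM : s ≤ M := by simp only [hsdef]; linarith
    have hq : t * M * m / s * s = t * M * m := div_mul_cancel₀ _ hs0.ne'
    unfold rhoConst
    split_ifs with h1 h2
    · -- t ≥ M/m, so t*m ≥ M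
      have h1' : M ≤ t * m := by
        have := (div_le_iff₀ hm).1 h1; linarith
      nlinarith [mul_nonneg (sub_nonneg.2 hsM) (sub_nonneg.2 (le_trans hsM h1')), hq, hs0]
    · -- t ≤ m/M, so t*M ≤ m
      have h2' : t * M ≤ m := (le_div_iff₀ hM).1 h2
      nlinarith [mul_nonneg (sub_nonneg.2 hsm) (sub_nonneg.2 (le_trans h2' hsm)), hq, hs0]
    · nlinarith [sq_nonneg (s - Real.sqrt (t * M * m)), hsq, hq, hs0, hsqpos]
end

section
/- Let A₁, …, Aₙ be positive definite operators satisfying mI ≤ Aᵢ ≤ MI for constants 0 < m ≤ M, and let w₁, …, wₙ be positive weights summing to 1. Then ∑ᵢ wᵢAᵢ ≤ K·(∑ᵢ wᵢAᵢ⁻¹)⁻¹, where K = (M + m)²/(4Mm) is the Kantorovich constant. -/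
set_option maxHeartbeats 1000000
set_option synthInstance.maxHeartbeats 400000

section CStar
variable {E : Type*} [NormedAddCommGroup E] [InnerProductSpace ℂ E] [CompleteSpace E]

local notation "A" => E →L[ℂ] E

lemma mySmulNonneg {x : A} (hx : 0 ≤ x) {w : ℝ} (hw : 0 ≤ w) : 0 ≤ w • x := by
  have hkey : star (algebraMap ℝ A (Real.sqrt w)) * x * algebraMap ℝ A (Real.sqrt w)
      = w • x := by
    rw [((IsSelfAdjoint.all _).algebraMap A).star_eq, Algebra.algebraMap_eq_smul_one,
      smul_mul_assoc, one_mul, mul_smul_comm, mul_one, smul_smul, Real.mul_self_sqrt hw]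
  rw [← hkey]
  exact star_left_conjugate_nonneg hx _

lemma mySmulMono {x y : A} (h : x ≤ y) {w : ℝ} (hw : 0 ≤ w) : w • x ≤ w • y := by
  rw [← sub_nonneg, ← smul_sub]
  exact mySmulNonneg (sub_nonneg.mpr h) hw

lemma myKantElem {a : A} (hu : IsUnit a) (hsa : IsSelfAdjoint a) {m M : ℝ} (hm : 0 < m)
    (h1 : algebraMap ℝ A m ≤ a) (h2 : a ≤ algebraMap ℝ A M) :
    a + (M * m) • Ring.inverse a ≤ algebraMap ℝ A (M + m) := by
  lift a to Aˣ using hu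
  have hLB : ∀ x ∈ spectrum ℝ (a:A), m ≤ x := fun x hx => by
    have h0 : (0:A) ≤ (a:A) - algebraMap ℝ A m := sub_nonneg.mpr h1
    have hmem : x - m ∈ spectrum ℝ ((a:A) - algebraMap ℝ A m) := by
      rw [← spectrum.sub_singleton_eq]; exact Set.sub_mem_sub hx rfl
    linarith [spectrum_nonneg_of_nonneg h0 hmem]
  have hUB : ∀ x ∈ spectrum ℝ (a:A), x ≤ M := fun x hx => by
    have h0 : (0:A) ≤ algebraMap ℝ A M - (a:A) := sub_nonneg.mpr h2
    have hmem : M - x ∈ spectrum ℝ (algebraMap ℝ A M - (a:A)) := by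
      rw [← spectrum.singleton_sub_eq]; exact Set.sub_mem_sub rfl hx
    linarith [spectrum_nonneg_of_nonneg h0 hmem]
  have hne : ∀ x ∈ spectrum ℝ (a:A), x ≠ 0 := fun x hx =>
    (lt_of_lt_of_le hm (hLB x hx)).ne'
  have hc0 : ContinuousOn (fun x : ℝ => x⁻¹) (spectrum ℝ (a:A)) :=
    ContinuousOn.inv₀ continuousOn_id hne
  have hc1 : ContinuousOn (fun x : ℝ => x + (M*m) • x⁻¹) (spectrum ℝ (a:A)) :=
    continuousOn_id.add (hc0.const_smul (M*m))
  have e1 : cfc (fun x : ℝ => (M + m) - (x + (M*m) • x⁻¹)) (a:A)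
      = algebraMap ℝ A (M + m) - ((a:A) + (M*m) • (↑a⁻¹ : A)) := by
    rw [cfc_sub _ _ _ continuousOn_const hc1, cfc_const _ _ hsa,
      cfc_add (a := (a:A)) (fun x : ℝ => x) (fun x : ℝ => (M*m) • x⁻¹) continuousOn_id
        (hc0.const_smul (M*m)),
      cfc_id' ℝ (a:A) hsa, cfc_smul (M*m) (fun x : ℝ => x⁻¹) (a:A) hc0,
      cfc_inv_id a hsa]
  have e2 : (0:A) ≤ cfc (fun x : ℝ => (M + m) - (x + (M*m) • x⁻¹)) (a:A) := by
    apply cfc_nonneg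
    intro x hx
    have hx0 : 0 < x := lt_of_lt_of_le hm (hLB x hx)
    have h3 := mul_nonneg (sub_nonneg.mpr (hUB x hx)) (sub_nonneg.mpr (hLB x hx))
    rw [smul_eq_mul, sub_nonneg, ← sub_nonneg (a := M + m)]
    have h4 : M + m - (x + M * m * x⁻¹) = (M - x) * (x - m) * x⁻¹ := by
      field_simp
      ring
    rw [h4]
    positivity
  rw [← sub_nonneg, Ring.inverse_unit, ← e1]
  exact e2

lemma myReverseStep {c : ℝ} (hc : 0 < c) (u : Aˣ) (hT0 : 0 ≤ (u:A)) (t₀ : ℝ) :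
    (2 * c * t₀) • (1:A) - c • (u:A) ≤ (c * t₀^2) • (↑u⁻¹ : A) := by
  have hinv : (0:A) ≤ ↑u⁻¹ := CFC.inv_nonneg_of_nonneg u hT0
  have hsa : IsSelfAdjoint ((u:A) - t₀ • 1) :=
    (IsSelfAdjoint.of_nonneg hT0).sub ((IsSelfAdjoint.all t₀).smul (IsSelfAdjoint.one A))
  have key : (0:A) ≤ ((u:A) - t₀ • 1) * ↑u⁻¹ * ((u:A) - t₀ • 1) := by
    have h := star_left_conjugate_nonneg hinv ((u:A) - t₀ • 1)
    rwa [hsa.star_eq] at h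
  have expand : ((u:A) - t₀ • 1) * ↑u⁻¹ * ((u:A) - t₀ • 1)
      = (u:A) - (2*t₀) • 1 + (t₀^2) • (↑u⁻¹:A) := by
    have h1 : (u:A) * ↑u⁻¹ = 1 := u.mul_inv
    have h2 : (↑u⁻¹:A) * u = 1 := u.inv_mul
    rw [sub_mul, smul_mul_assoc, one_mul, h1, sub_mul, one_mul, mul_sub,
      mul_smul_comm, mul_one, smul_mul_assoc, h2, smul_smul]
    module
  rw [expand] at key
  rw [← sub_nonneg]
  have h3 := mySmulNonneg key hc.le
  have h4 : c • ((u:A) - (2*t₀) • 1 + (t₀^2) • (↑u⁻¹:A))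
      = (c * t₀^2) • (↑u⁻¹ : A) - ((2 * c * t₀) • (1:A) - c • (u:A)) := by
    module
  rwa [h4] at h3

end CStar



variable {H : Type*} [NormedAddCommGroup H] [InnerProductSpace ℂ H] [CompleteSpace H]

theorem kantorovich_reverse_am_hm {n : ℕ} (w : Fin n → ℝ) (hw : IsProbVec w)
    (A : Fin n → (H →L[ℂ] H)) (hA : ∀ i, IsPosDef (A i)) (m M : ℝ) (hm : 0 < m) (hmM : m ≤ M)
    (hbd : ∀ i, m • (1 : H →L[ℂ] H) ≤ A i ∧ A i ≤ M • (1 : H →L[ℂ] H)) :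
    ∑ i, w i • A i ≤ ((M + m) ^ 2 / (4 * M * m)) • Ring.inverse (∑ i, w i • Ring.inverse (A i)) := by
  have hM0 : (0:ℝ) < M := lt_of_lt_of_le hm hmM
  have hone : (0:(H →L[ℂ] H)) ≤ 1 := by simpa using star_mul_self_nonneg (1:(H →L[ℂ] H))
  have halg : ∀ c : ℝ, algebraMap ℝ (H →L[ℂ] H) c = c • (1:(H →L[ℂ] H)) := fun c =>
    Algebra.algebraMap_eq_smul_one c
  -- positivity of each A i in the order sense
  have hAnn : ∀ i, (0:(H →L[ℂ] H)) ≤ A i := fun i => by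
    refine le_trans ?_ (hbd i).1
    exact mySmulNonneg hone hm.le
  -- per-element Kantorovich bound
  have hk : ∀ i, A i + (M * m) • Ring.inverse (A i) ≤ (M + m) • (1:(H →L[ℂ] H)) := fun i => by
    rw [← halg]
    exact myKantElem (hA i).2 (hA i).1.isSelfAdjoint hm (by rw [halg]; exact (hbd i).1)
      (by rw [halg]; exact (hbd i).2)
  set T : (H →L[ℂ] H) := ∑ i, w i • Ring.inverse (A i) with hT
  -- summed inequality
  have hsum : ∑ i, w i • A i + (M * m) • T ≤ (M + m) • (1:(H →L[ℂ] H)) := by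
    have h1 : ∑ i, w i • (A i + (M * m) • Ring.inverse (A i))
        = ∑ i, w i • A i + (M * m) • T := by
      rw [hT, Finset.smul_sum, ← Finset.sum_add_distrib]
      refine Finset.sum_congr rfl fun i _ => ?_
      rw [smul_add, smul_comm]
    have h2 : ∑ i, w i • (A i + (M * m) • Ring.inverse (A i))
        ≤ ∑ i, w i • ((M + m) • (1:(H →L[ℂ] H))) :=
      Finset.sum_le_sum fun i _ => mySmulMono (hk i) (hw.1 i).le
    rw [h1] at h2
    rwa [← Finset.sum_smul, hw.2, one_smul] at h2
  -- inverses are bounded below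
  have hMu : IsUnit (algebraMap ℝ (H →L[ℂ] H) M) := (isUnit_iff_ne_zero.mpr hM0.ne').map (algebraMap ℝ (H →L[ℂ] H))
  have hinv_nonneg : ∀ i, (0:(H →L[ℂ] H)) ≤ Ring.inverse (A i) := fun i => by
    rw [← (hA i).2.unit_spec, Ring.inverse_unit]
    exact CFC.inv_nonneg_of_nonneg _ (by rw [(hA i).2.unit_spec]; exact hAnn i)
  have hinv_lb : ∀ i, algebraMap ℝ (H →L[ℂ] H) M⁻¹ ≤ Ring.inverse (A i) := fun i => by
    let uM : (H →L[ℂ] H)ˣ := ⟨algebraMap ℝ (H →L[ℂ] H) M, algebraMap ℝ (H →L[ℂ] H) M⁻¹,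
      by rw [← map_mul, mul_inv_cancel₀ hM0.ne', map_one],
      by rw [← map_mul, inv_mul_cancel₀ hM0.ne', map_one]⟩
    have hcoeM : (uM : (H →L[ℂ] H)) = algebraMap ℝ (H →L[ℂ] H) M := rfl
    have hcoeMinv : ((uM⁻¹ : (H →L[ℂ] H)ˣ) : (H →L[ℂ] H)) = algebraMap ℝ (H →L[ℂ] H) M⁻¹ := rfl
    have h := CStarAlgebra.inv_le_inv (a := (hA i).2.unit) (b := uM)
      (by rw [(hA i).2.unit_spec]; exact hAnn i)
      (by rw [(hA i).2.unit_spec, hcoeM, halg]; exact (hbd i).2)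
    rw [hcoeMinv] at h
    rwa [← (hA i).2.unit_spec, Ring.inverse_unit]
  have hTlb : algebraMap ℝ (H →L[ℂ] H) M⁻¹ ≤ T := by
    calc algebraMap ℝ (H →L[ℂ] H) M⁻¹ = ∑ i, w i • algebraMap ℝ (H →L[ℂ] H) M⁻¹ := by
          rw [← Finset.sum_smul, hw.2, one_smul]
      _ ≤ T := Finset.sum_le_sum fun i _ => mySmulMono (hinv_lb i) (hw.1 i).le
  have hMinv_nonneg : (0:(H →L[ℂ] H)) ≤ algebraMap ℝ (H →L[ℂ] H) M⁻¹ := by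
    rw [halg]; exact mySmulNonneg hone (by positivity)
  have hTu : IsUnit T :=
    CStarAlgebra.isUnit_of_le _ hTlb ⟨hMinv_nonneg, (isUnit_iff_ne_zero.mpr (by positivity : M⁻¹ ≠ (0:ℝ))).map
      (algebraMap ℝ (H →L[ℂ] H))⟩
  have hT0 : (0:(H →L[ℂ] H)) ≤ T := le_trans hMinv_nonneg hTlb
  -- reverse step
  have rs := myReverseStep (mul_pos hM0 hm) hTu.unit (by rw [hTu.unit_spec]; exact hT0)
    ((M + m) / (2 * (M * m)))
  rw [hTu.unit_spec] at rs
  have hs1 : 2 * (M * m) * ((M + m) / (2 * (M * m))) = M + m := by field_simp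
  have hs2 : M * m * ((M + m) / (2 * (M * m)))^2 = (M + m) ^ 2 / (4 * M * m) := by
    field_simp; ring
  rw [hs1, hs2] at rs
  have hfin : ∑ i, w i • A i ≤ (M + m) • (1:(H →L[ℂ] H)) - (M * m) • T := by
    rw [← sub_nonneg]
    have h := sub_nonneg.mpr hsum
    have he : (M + m) • (1:(H →L[ℂ] H)) - (∑ i, w i • A i + (M * m) • T)
        = (M + m) • (1:(H →L[ℂ] H)) - (M * m) • T - ∑ i, w i • A i := by abel
    rwa [he] at h
  have hRinv : Ring.inverse T = ((hTu.unit⁻¹ : (H →L[ℂ] H)ˣ) : (H →L[ℂ] H)) := by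
    have h := Ring.inverse_unit hTu.unit
    rwa [hTu.unit_spec] at h
  rw [hRinv]
  exact le_trans hfin rs
end

section
/- Let G be an ordered mean. If A₁, …, Aₙ are positive definite operators with mI ≤ Aᵢ ≤ MI for constants 0 < m ≤ M and ω is a positive probability vector, then ∑ᵢ wᵢAᵢ ≤ K·Gₙ(ω; A₁, …, Aₙ), where K = (M + m)²/(4Mm). -/
set_option synthInstance.maxHeartbeats 1000000
set_option maxHeartbeats 1000000


variable {H : Type*} [NormedAddCommGroup H] [InnerProductSpace ℂ H] [CompleteSpace H]

lemma my_smul_nonneg {k : ℝ} (hk : 0 ≤ k) {T : H →L[ℂ] H} (hT : 0 ≤ T) :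
    0 ≤ k • T := by
  have h1 : k • T = star (Real.sqrt k • (1 : H →L[ℂ] H)) * T * (Real.sqrt k • 1) := by
    simp [star_smul, mul_smul_comm, smul_mul_assoc, smul_smul, Real.mul_self_sqrt hk]
  rw [h1]
  exact star_left_conjugate_nonneg hT _

lemma my_smul_le_smul {k : ℝ} (hk : 0 ≤ k) {a b : H →L[ℂ] H} (h : a ≤ b) :
    k • a ≤ k • b := by
  rw [← sub_nonneg, ← smul_sub]
  exact my_smul_nonneg hk (sub_nonneg.mpr h)

open ContinuousLinearMap in
lemma my_key1 {a : H →L[ℂ] H} (hpos : a.IsPositive) (hu : IsUnit a) {m M : ℝ}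
    (hm : 0 < m) (hmM : m ≤ M) (h1 : m • (1 : H →L[ℂ] H) ≤ a) (h2 : a ≤ M • (1 : H →L[ℂ] H)) :
    (a + (M*m) • Ring.inverse a ≤ (M+m) • (1 : H →L[ℂ] H)) ∧
      ((1/M) • (1 : H →L[ℂ] H) ≤ Ring.inverse a) := by
  have hsa : IsSelfAdjoint a := hpos.isSelfAdjoint
  have hM : 0 < M := hm.trans_le hmM
  have specM : ∀ x ∈ spectrum ℝ a, x ≤ M := by
    rw [← le_algebraMap_iff_spectrum_le (a := a) hsa, Algebra.algebraMap_eq_smul_one]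
    exact h2
  have specm : ∀ x ∈ spectrum ℝ a, m ≤ x := by
    rw [← algebraMap_le_iff_le_spectrum (a := a) hsa, Algebra.algebraMap_eq_smul_one]
    exact h1
  have hx0 : ∀ x ∈ spectrum ℝ a, 0 < x := fun x hx => hm.trans_le (specm x hx)
  have hcont : ContinuousOn (fun x : ℝ => x⁻¹) (spectrum ℝ a) :=
    ContinuousOn.inv₀ continuousOn_id fun x hx => (hx0 x hx).ne'
  have hinv : Ring.inverse a = cfc (fun x : ℝ => x⁻¹) a := by
    obtain ⟨u, hu'⟩ := hu
    have hsu : IsSelfAdjoint (u : H →L[ℂ] H) := hu' ▸ hsa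
    rw [← hu', Ring.inverse_unit, ← cfc_inv_id (R := ℝ) u hsu]
  constructor
  · have e : cfc (fun x : ℝ => x + (M*m) * x⁻¹) a = a + (M*m) • Ring.inverse a := by
      rw [cfc_add a (fun x : ℝ => x) (fun x : ℝ => (M*m) * x⁻¹) (by fun_prop)
        (hcont.const_smul (M*m)), cfc_id' ℝ a, cfc_const_mul (M*m) _ a hcont, hinv]
    rw [← Algebra.algebraMap_eq_smul_one, ← e]
    apply cfc_le_algebraMap _ _ _ ?_ ?_
    · intro x hx
      have hx0' := hx0 x hx
      have hxi : x * x⁻¹ = 1 := mul_inv_cancel₀ hx0'.ne'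
      nlinarith [mul_nonneg (mul_nonneg (sub_nonneg.2 (specM x hx)) (sub_nonneg.2 (specm x hx)))
        (inv_nonneg.2 hx0'.le), hxi, hx0', inv_nonneg.2 hx0'.le]
    · exact (continuousOn_id).add (hcont.const_smul (M*m))
  · rw [hinv, ← Algebra.algebraMap_eq_smul_one]
    apply algebraMap_le_cfc _ _ _ ?_ hcont
    intro x hx
    rw [one_div]
    exact inv_anti₀ (hx0 x hx) (specM x hx)

lemma my_key2 {h : H →L[ℂ] H} (hsa : IsSelfAdjoint h) (hu : IsUnit h) {m M : ℝ}
    (hm : 0 < m) (hM : 0 < M) (hlb : (1/M) • (1 : H →L[ℂ] H) ≤ h) :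
    (M+m) • (1 : H →L[ℂ] H) - (M*m) • h ≤ ((M+m)^2/(4*M*m)) • Ring.inverse h := by
  set K : ℝ := (M+m)^2/(4*M*m) with hK
  have spec0 : ∀ x ∈ spectrum ℝ h, 0 < x := by
    intro x hx
    have : ∀ x ∈ spectrum ℝ h, 1/M ≤ x := by
      rw [← algebraMap_le_iff_le_spectrum (a := h) hsa, Algebra.algebraMap_eq_smul_one]
      exact hlb
    exact lt_of_lt_of_le (by positivity) (this x hx)
  have hcont : ContinuousOn (fun x : ℝ => x⁻¹) (spectrum ℝ h) :=
    ContinuousOn.inv₀ continuousOn_id fun x hx => (spec0 x hx).ne'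
  have hinv : Ring.inverse h = cfc (fun x : ℝ => x⁻¹) h := by
    obtain ⟨u, hu'⟩ := hu
    have hsu : IsSelfAdjoint (u : H →L[ℂ] H) := hu' ▸ hsa
    rw [← hu', Ring.inverse_unit, ← cfc_inv_id (R := ℝ) u hsu]
  have e : cfc (fun x : ℝ => K * x⁻¹ + (M*m) * x) h = K • Ring.inverse h + (M*m) • h := by
    rw [cfc_add h (fun x : ℝ => K * x⁻¹) (fun x : ℝ => (M*m) * x) (hcont.const_smul K)
      (by fun_prop), cfc_const_mul K _ h hcont, cfc_const_mul_id (M*m) h, hinv]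
  have main : (M+m) • (1 : H →L[ℂ] H) ≤ K • Ring.inverse h + (M*m) • h := by
    rw [← e, ← Algebra.algebraMap_eq_smul_one]
    apply algebraMap_le_cfc _ _ _ ?_ ((hcont.const_smul K).add (by fun_prop))
    intro x hx
    have hx0 := spec0 x hx
    have key : K * x⁻¹ + M * m * x - (M + m) = (M*m*x^2 - (M+m)*x + K) * x⁻¹ := by
      field_simp
      ring
    have hquad : 0 ≤ M*m*x^2 - (M+m)*x + K := by
      have hK4 : K * (4*M*m) = (M+m)^2 := div_mul_cancel₀ _ (by positivity)
      nlinarith [sq_nonneg (2*M*m*x - (M+m)), mul_pos hM hm]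
    simp only [Pi.add_apply, Pi.smul_apply, smul_eq_mul]
    linarith [mul_nonneg hquad (inv_nonneg.2 hx0.le), key.ge, key.le]
  calc (M+m) • (1 : H →L[ℂ] H) - (M*m) • h ≤
      (K • Ring.inverse h + (M*m) • h) - (M*m) • h := by
        exact sub_le_sub_right main _
    _ = K • Ring.inverse h := by abel
theorem kantorovich_reverse_am_G (G : OrderedMean H) {n : ℕ} (w : Fin n → ℝ)
    (hw : IsProbVec w) (A : Fin n → (H →L[ℂ] H)) (hA : ∀ i, IsPosDef (A i))
    (m M : ℝ) (hm : 0 < m) (hmM : m ≤ M)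
    (hbd : ∀ i, m • (1 : H →L[ℂ] H) ≤ A i ∧ A i ≤ M • (1 : H →L[ℂ] H)) :
    ∑ i, w i • A i ≤ ((M + m) ^ 2 / (4 * M * m)) • G.G n w A := by
  have hM : 0 < M := hm.trans_le hmM
  have key := fun i => my_key1 (hA i).1 (hA i).2 hm hmM (hbd i).1 (hbd i).2
  set h : H →L[ℂ] H := ∑ i, w i • Ring.inverse (A i) with hh
  have h1M : (0 : H →L[ℂ] H) ≤ (1/M) • 1 :=
    my_smul_nonneg (by positivity) zero_le_one
  have hlb : (1/M) • (1 : H →L[ℂ] H) ≤ h := by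
    have e : ∑ i, w i • ((1/M) • (1 : H →L[ℂ] H)) = (1/M) • 1 := by
      rw [← Finset.sum_smul, hw.2, one_smul]
    rw [← e]
    exact Finset.sum_le_sum fun i _ => my_smul_le_smul (hw.1 i).le (key i).2
  have hnn : (0 : H →L[ℂ] H) ≤ h := h1M.trans hlb
  have hsa_h : IsSelfAdjoint h := ((ContinuousLinearMap.nonneg_iff_isPositive h).1 hnn).isSelfAdjoint
  have hu_h : IsUnit h := by
    refine CStarAlgebra.isUnit_of_le _ hlb ⟨h1M, ?_⟩
    rw [← Algebra.algebraMap_eq_smul_one]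
    exact (isUnit_iff_ne_zero.mpr (by positivity)).map (algebraMap ℝ (H →L[ℂ] H))
  have step1 : ∑ i, w i • A i ≤ (M+m) • (1 : H →L[ℂ] H) - (M*m) • h := by
    have e1 : ∑ i, w i • ((M+m) • (1 : H →L[ℂ] H)) = (M+m) • 1 := by
      rw [← Finset.sum_smul, hw.2, one_smul]
    have e2 : ∑ i, w i • ((M*m) • Ring.inverse (A i)) = (M*m) • h := by
      rw [hh, Finset.smul_sum]
      exact Finset.sum_congr rfl fun i _ => smul_comm _ _ _
    calc ∑ i, w i • A i
        ≤ ∑ i, w i • ((M+m) • (1 : H →L[ℂ] H) - (M*m) • Ring.inverse (A i)) :=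
          Finset.sum_le_sum fun i _ =>
            my_smul_le_smul (hw.1 i).le (le_sub_iff_add_le.mpr (key i).1)
      _ = (M+m) • (1 : H →L[ℂ] H) - (M*m) • h := by
          simp only [smul_sub, Finset.sum_sub_distrib, e1, e2]
  refine step1.trans ((my_key2 hsa_h hu_h hm hM hlb).trans ?_)
  exact my_smul_le_smul (by positivity) (G.harm_le n w A hw hA)
end

section
/- Let G be an ordered mean and let 𝔸 = [Aᵢⱼ] be an n×k array of positive definite operators with mI ≤ Aᵢⱼ ≤ MI for constants 0 < m ≤ M. Then for positive probability vectors ω ∈ Δₙ and λ ∈ Δₖ, Gₙ(ω; Gₖ(λ; 𝔸¹), …, Gₖ(λ; 𝔸ⁿ)) ≤ K·Gₖ(λ; Gₙ(ω; 𝔸₁), …, Gₙ(ω; 𝔸ₖ)), where K = (M + m)²/(4Mm), 𝔸ⁱ is the i-th row and 𝔸ⱼ is the j-th column of 𝔸. -/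
set_option synthInstance.maxHeartbeats 1000000
set_option maxHeartbeats 4000000
set_option linter.unusedSectionVars false
set_option linter.unusedVariables false

variable {H : Type*} [NormedAddCommGroup H] [InnerProductSpace ℂ H] [CompleteSpace H]

namespace MKaux

lemma smul_nonneg'' {r : ℝ} {Z : H →L[ℂ] H} (hr : 0 ≤ r) (h : 0 ≤ Z) : 0 ≤ r • Z := by
  have key : (Real.sqrt r • (1 : H →L[ℂ] H)) * Z * (Real.sqrt r • 1) = r • Z := by
    simp [smul_mul_assoc, mul_smul_comm, smul_smul, Real.mul_self_sqrt hr]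
  have hsa : star (Real.sqrt r • (1 : H →L[ℂ] H)) = Real.sqrt r • 1 := by
    rw [star_smul, star_one]; norm_num
  calc (0:H →L[ℂ] H) ≤ star (Real.sqrt r • (1 : H →L[ℂ] H)) * Z * (Real.sqrt r • 1) :=
        star_left_conjugate_nonneg h _
    _ = r • Z := by rw [hsa, key]

lemma smul_le_smul'' {r : ℝ} {X Y : H →L[ℂ] H} (hr : 0 ≤ r) (h : X ≤ Y) : r • X ≤ r • Y := by
  have := smul_nonneg'' hr (sub_nonneg.2 h)
  rw [smul_sub] at this
  exact sub_nonneg.1 this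

lemma isUnit_smul_one {r : ℝ} (hr : r ≠ 0) : IsUnit (r • (1 : H →L[ℂ] H)) := by
  rw [← Algebra.algebraMap_eq_smul_one]
  exact (IsUnit.mk0 r hr).map (algebraMap ℝ _)

lemma inverse_eq {X Y : H →L[ℂ] H} (hu : IsUnit X) (h : X * Y = 1) : Ring.inverse X = Y := by
  calc Ring.inverse X = Ring.inverse X * (X * Y) := by rw [h, mul_one]
    _ = (Ring.inverse X * X) * Y := by rw [mul_assoc]
    _ = Y := by rw [Ring.inverse_mul_cancel _ hu, one_mul]

lemma inverse_smul_one {r : ℝ} (hr : r ≠ 0) :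
    Ring.inverse (r • (1 : H →L[ℂ] H)) = r⁻¹ • 1 := by
  refine inverse_eq (isUnit_smul_one hr) ?_
  simp [smul_mul_assoc, mul_smul_comm, smul_smul, hr]

lemma inverse_nonneg' {X : H →L[ℂ] H} (h : 0 ≤ X) (hu : IsUnit X) : 0 ≤ Ring.inverse X := by
  have := CFC.inv_nonneg_of_nonneg hu.unit (by simpa [hu.unit_spec] using h)
  rwa [← Ring.inverse_unit, hu.unit_spec] at this

lemma inverse_isUnit {X : H →L[ℂ] H} (hu : IsUnit X) : IsUnit (Ring.inverse X) := by
  rw [← hu.unit_spec, Ring.inverse_unit]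
  exact (hu.unit⁻¹).isUnit

lemma inverse_inverse' {X : H →L[ℂ] H} (hu : IsUnit X) :
    Ring.inverse (Ring.inverse X) = X := by
  conv_lhs => rw [← hu.unit_spec, Ring.inverse_unit, Ring.inverse_unit, inv_inv]
  exact hu.unit_spec

lemma inv_anti {X Y : H →L[ℂ] H} (hX : 0 ≤ X) (hXu : IsUnit X) (hYu : IsUnit Y) (h : X ≤ Y) :
    Ring.inverse Y ≤ Ring.inverse X := by
  have := CStarAlgebra.inv_le_inv (A := H →L[ℂ] H) (a := hXu.unit) (b := hYu.unit)
    (by rwa [hXu.unit_spec]) (by rwa [hXu.unit_spec, hYu.unit_spec])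
  rw [← hXu.unit_spec, ← hYu.unit_spec, Ring.inverse_unit, Ring.inverse_unit]
  exact this

lemma spectrum_subset' {X : H →L[ℂ] H} {m M : ℝ} (hsa : IsSelfAdjoint X)
    (h1 : m • 1 ≤ X) (h2 : X ≤ M • 1) : spectrum ℝ X ⊆ Set.Icc m M := by
  rw [← Algebra.algebraMap_eq_smul_one] at h1 h2
  intro x hx
  exact ⟨(algebraMap_le_iff_le_spectrum hsa).mp h1 x hx,
    (le_algebraMap_iff_spectrum_le hsa).mp h2 x hx⟩

lemma kant_one {X : H →L[ℂ] H} {m M : ℝ} (hm : 0 < m) (h0 : 0 ≤ X) (hu : IsUnit X)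
    (h1 : m • 1 ≤ X) (h2 : X ≤ M • 1) :
    X + (M * m) • Ring.inverse X ≤ (M + m) • 1 := by
  have hsa : IsSelfAdjoint X := .of_nonneg h0
  have hsp := spectrum_subset' hsa h1 h2
  have hne : ∀ x ∈ spectrum ℝ X, x ≠ 0 := fun x hx => (lt_of_lt_of_le hm (hsp hx).1).ne'
  have hcont : ContinuousOn (fun x : ℝ => x⁻¹) (spectrum ℝ X) :=
    ContinuousOn.inv₀ continuousOn_id hne
  have hinv : Ring.inverse X = cfc (fun x : ℝ => x⁻¹) X := by
    refine inverse_eq hu ?_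
    have hmul : cfc (fun x : ℝ => x * x⁻¹) X = cfc (id : ℝ → ℝ) X * cfc (fun x : ℝ => x⁻¹) X :=
      cfc_mul _ _ X continuousOn_id hcont
    rw [cfc_id ℝ X,
      cfc_congr (g := fun _ => (1:ℝ)) (fun x hx => mul_inv_cancel₀ (hne x hx)),
      cfc_const_one ℝ X] at hmul
    exact hmul.symm
  rw [← sub_nonneg]
  have key : (M + m) • (1 : H →L[ℂ] H) - (X + (M * m) • Ring.inverse X)
      = cfc (fun x : ℝ => (M + m) - (x + (M * m) * x⁻¹)) X := by
    have e1 : cfc (fun x : ℝ => (M + m) - (x + (M * m) * x⁻¹)) X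
        = cfc (fun _ : ℝ => (M + m)) X - cfc (fun x : ℝ => x + (M * m) * x⁻¹) X :=
      cfc_sub _ _ X continuousOn_const (continuousOn_id.add (continuousOn_const.mul hcont))
    have e2 : cfc (fun x : ℝ => x + (M * m) * x⁻¹) X
        = cfc (id : ℝ → ℝ) X + cfc (fun x : ℝ => (M * m) * x⁻¹) X :=
      cfc_add X _ _ continuousOn_id (continuousOn_const.mul hcont)
    have e3 : cfc (fun x : ℝ => (M * m) * x⁻¹) X = (M * m) • cfc (fun x : ℝ => x⁻¹) X := by
      rw [← cfc_smul (M * m) _ X hcont]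
      simp [smul_eq_mul]
    rw [e1, e2, e3, cfc_id ℝ X, cfc_const _ X, Algebra.algebraMap_eq_smul_one, hinv]
  rw [key]
  refine cfc_nonneg fun x hx => ?_
  obtain ⟨hx1, hx2⟩ := hsp hx
  have hx0 : 0 < x := lt_of_lt_of_le hm hx1
  have e : (M + m) - (x + (M * m) * x⁻¹) = ((M - x) * (x - m)) * x⁻¹ := by
    field_simp
    ring
  rw [e]
  have : 0 ≤ (M - x) * (x - m) := mul_nonneg (by linarith) (by linarith)
  positivity

lemma kant_two {T : H →L[ℂ] H} {m M : ℝ} (hm : 0 < m) (hM : 0 < M)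
    (hT0 : 0 ≤ T) (hTu : IsUnit T) :
    (M + m) • (1 : H →L[ℂ] H) - (M * m) • T ≤ ((M + m) ^ 2 / (4 * M * m)) • Ring.inverse T := by
  set c : ℝ := (M + m) / (2 * (M * m)) with hc
  set B : H →L[ℂ] H := T - c • 1 with hB
  have hTsa : IsSelfAdjoint T := .of_nonneg hT0
  have hBsa : star B = B := by
    rw [hB, star_sub, hTsa.star_eq, star_smul, star_one]
    norm_num
  have hconj : 0 ≤ star B * Ring.inverse T * B := star_left_conjugate_nonneg (inverse_nonneg' hT0 hTu) B
  rw [hBsa] at hconj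
  have h1 : T * Ring.inverse T = 1 := Ring.mul_inverse_cancel _ hTu
  have h2 : Ring.inverse T * T = 1 := Ring.inverse_mul_cancel _ hTu
  have hexp : B * Ring.inverse T * B = T - (2 * c) • 1 + (c * c) • Ring.inverse T := by
    rw [hB]
    simp only [sub_mul, mul_sub, smul_mul_assoc, mul_smul_comm, one_mul, mul_one, smul_smul]
    rw [h1, h2]
    simp only [one_mul, smul_sub, smul_smul]
    rw [two_mul, add_smul]
    abel
  have hsc1 : (M * m) * (2 * c) = M + m := by
    rw [hc]; field_simp
  have hsc2 : (M * m) * (c * c) = (M + m) ^ 2 / (4 * M * m) := by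
    rw [hc]; field_simp; ring
  rw [← sub_nonneg]
  calc (0 : H →L[ℂ] H) ≤ (M * m) • (B * Ring.inverse T * B) :=
        smul_nonneg'' (mul_nonneg hM.le hm.le) hconj
    _ = ((M + m) ^ 2 / (4 * M * m)) • Ring.inverse T - ((M + m) • 1 - (M * m) • T) := by
        rw [hexp, smul_add, smul_sub, smul_smul, smul_smul, hsc1, hsc2]
        abel

lemma one_nonneg : (0 : H →L[ℂ] H) ≤ 1 := by
  simpa using star_mul_self_nonneg (1 : H →L[ℂ] H)

lemma posdef_iff {X : H →L[ℂ] H} : IsPosDef X ↔ 0 ≤ X ∧ IsUnit X := by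
  rw [IsPosDef, ContinuousLinearMap.nonneg_iff_isPositive]

lemma posdef_of_le {c : ℝ} (hc : 0 < c) {X : H →L[ℂ] H} (h0 : 0 ≤ X) (h : c • 1 ≤ X) :
    IsPosDef X :=
  posdef_iff.mpr ⟨h0, CStarAlgebra.isUnit_of_le _ h (IsStrictlyPositive.iff_of_unital.mpr
    ⟨smul_nonneg'' hc.le one_nonneg, isUnit_smul_one hc.ne'⟩)⟩

lemma sum_smul_le {ι : Type*} {s : Finset ι} {p : ι → ℝ} {X Y : ι → (H →L[ℂ] H)}
    (hp : ∀ i ∈ s, 0 ≤ p i) (h : ∀ i ∈ s, X i ≤ Y i) :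
    ∑ i ∈ s, p i • X i ≤ ∑ i ∈ s, p i • Y i :=
  Finset.sum_le_sum fun i hi => smul_le_smul'' (hp i hi) (h i hi)

lemma sum_smul_const {n : ℕ} {p : Fin n → ℝ} (hsum : ∑ i, p i = 1) (Z : H →L[ℂ] H) :
    ∑ i, p i • Z = Z := by
  rw [← Finset.sum_smul, hsum, one_smul]

lemma double_smul_const {n k : ℕ} {w : Fin n → ℝ} {l : Fin k → ℝ}
    (hw : ∑ i, w i = 1) (hl : ∑ j, l j = 1) (Z : H →L[ℂ] H) :
    ∑ i, ∑ j, (w i * l j) • Z = Z := by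
  have : ∀ i, ∑ j, (w i * l j) • Z = w i • Z := by
    intro i
    simp only [mul_smul, ← Finset.smul_sum, sum_smul_const hl]
  simp only [this, sum_smul_const hw]

end MKaux

open MKaux

theorem mixture_kantorovich (G : OrderedMean H) {n k : ℕ} (w : Fin n → ℝ) (l : Fin k → ℝ)
    (hw : IsProbVec w) (hl : IsProbVec l) (A : Fin n → Fin k → (H →L[ℂ] H))
    (hA : ∀ i j, IsPosDef (A i j)) (m M : ℝ) (hm : 0 < m) (hmM : m ≤ M)
    (hbd : ∀ i j, m • (1 : H →L[ℂ] H) ≤ A i j ∧ A i j ≤ M • (1 : H →L[ℂ] H)) :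
    G.G n w (fun i => G.G k l (A i)) ≤
      ((M + m) ^ 2 / (4 * M * m)) • G.G k l (fun j => G.G n w (fun i => A i j)) := by
  obtain ⟨hwpos, hwsum⟩ := id hw
  obtain ⟨hlpos, hlsum⟩ := id hl
  have hM : 0 < M := hm.trans_le hmM
  set K : ℝ := (M + m) ^ 2 / (4 * M * m) with hKdef
  have hK0 : 0 ≤ K := by positivity
  have hA0 : ∀ i j, 0 ≤ A i j := fun i j => (posdef_iff.mp (hA i j)).1
  have hAu : ∀ i j, IsUnit (A i j) := fun i j => (hA i j).2
  have hAlow : ∀ i j, m • 1 ≤ A i j := fun i j => (hbd i j).1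
  have hAup : ∀ i j, A i j ≤ M • 1 := fun i j => (hbd i j).2
  -- the row arithmetic means C i
  set C : Fin n → (H →L[ℂ] H) := fun i => ∑ j, l j • A i j with hCdef
  have hCge : ∀ i, m • 1 ≤ C i := fun i =>
    calc m • (1 : H →L[ℂ] H) = ∑ j, l j • (m • (1 : H →L[ℂ] H)) := (sum_smul_const hlsum _).symm
      _ ≤ ∑ j, l j • A i j := sum_smul_le (fun j _ => (hlpos j).le) (fun j _ => hAlow i j)
  have hC0 : ∀ i, 0 ≤ C i := fun i =>
    Finset.sum_nonneg fun j _ => smul_nonneg'' (hlpos j).le (hA0 i j)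
  have hCpd : ∀ i, IsPosDef (C i) := fun i => posdef_of_le hm (hC0 i) (hCge i)
  have step1 : G.G n w (fun i => G.G k l (A i)) ≤ G.G n w C :=
    G.mono n w C _ hw hCpd (fun i => G.posDef k l (A i) hl (hA i))
      (fun i => G.le_arith k l (A i) hl (hA i))
  have step2 : G.G n w C ≤ ∑ i, w i • C i := G.le_arith n w C hw hCpd
  -- double arithmetic and harmonic sums
  set S : H →L[ℂ] H := ∑ i, ∑ j, (w i * l j) • A i j with hSdef
  have hSeq : ∑ i, w i • C i = S := by
    simp only [hCdef, hSdef, Finset.smul_sum, smul_smul]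
  set iA : Fin n → Fin k → (H →L[ℂ] H) := fun i j => Ring.inverse (A i j) with hiAdef
  have hiA0 : ∀ i j, 0 ≤ iA i j := fun i j => inverse_nonneg' (hA0 i j) (hAu i j)
  have hiAge : ∀ i j, M⁻¹ • 1 ≤ iA i j := fun i j => by
    have h := inv_anti (hA0 i j) (hAu i j) (isUnit_smul_one hM.ne') (hAup i j)
    rwa [inverse_smul_one hM.ne'] at h
  set T : H →L[ℂ] H := ∑ i, ∑ j, (w i * l j) • iA i j with hTdef
  have hwl0 : ∀ i j, 0 ≤ w i * l j := fun i j => mul_nonneg (hwpos i).le (hlpos j).le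
  -- Kantorovich bound for the double sums
  have hST : S + (M * m) • T ≤ (M + m) • 1 := by
    have expand : ∀ (i : Fin n) (j : Fin k),
        (w i * l j) • (A i j + (M * m) • iA i j)
          = (w i * l j) • A i j + (M * m) • ((w i * l j) • iA i j) := fun i j => by
      rw [smul_add, smul_comm]
    calc S + (M * m) • T
        = ∑ i, ∑ j, ((w i * l j) • A i j + (M * m) • ((w i * l j) • iA i j)) := by
          simp only [hSdef, hTdef, Finset.smul_sum, Finset.sum_add_distrib]
      _ = ∑ i, ∑ j, (w i * l j) • (A i j + (M * m) • iA i j) := by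
          simp only [expand]
      _ ≤ ∑ i, ∑ j, (w i * l j) • ((M + m) • (1 : H →L[ℂ] H)) :=
          Finset.sum_le_sum fun i _ => Finset.sum_le_sum fun j _ =>
            smul_le_smul'' (hwl0 i j)
              (kant_one hm (hA0 i j) (hAu i j) (hAlow i j) (hAup i j))
      _ = (M + m) • 1 := double_smul_const hwsum hlsum _
  have hSle : S ≤ (M + m) • 1 - (M * m) • T := le_sub_iff_add_le.mpr hST
  -- T is positive definite
  have hT0 : 0 ≤ T := Finset.sum_nonneg fun i _ => Finset.sum_nonneg fun j _ =>
    smul_nonneg'' (hwl0 i j) (hiA0 i j)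
  have hTge : M⁻¹ • 1 ≤ T :=
    calc M⁻¹ • (1 : H →L[ℂ] H) = ∑ i, ∑ j, (w i * l j) • (M⁻¹ • (1 : H →L[ℂ] H)) :=
          (double_smul_const hwsum hlsum _).symm
      _ ≤ T := Finset.sum_le_sum fun i _ => Finset.sum_le_sum fun j _ =>
          smul_le_smul'' (hwl0 i j) (hiAge i j)
  have hTu : IsUnit T := (posdef_of_le (inv_pos.2 hM) hT0 hTge).2
  have hK2 : (M + m) • 1 - (M * m) • T ≤ K • Ring.inverse T := kant_two hm hM hT0 hTu
  -- the column means B j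
  set B : Fin k → (H →L[ℂ] H) := fun j => G.G n w (fun i => A i j) with hBdef
  have hBpd : ∀ j, IsPosDef (B j) := fun j => G.posDef n w _ hw (fun i => hA i j)
  have honepd : IsPosDef (1 : H →L[ℂ] H) := posdef_iff.mpr ⟨one_nonneg, isUnit_one⟩
  have hone : G.G n w (fun _ => (1 : H →L[ℂ] H)) = 1 := by
    refine le_antisymm ?_ ?_
    · have h := G.le_arith n w (fun _ => 1) hw (fun _ => honepd)
      rwa [sum_smul_const hwsum] at h
    · have h := G.harm_le n w (fun _ => 1) hw (fun _ => honepd)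
      simpa [Ring.inverse_one, sum_smul_const hwsum] using h
  have hconst : ∀ (a : ℝ), 0 < a → G.G n w (fun _ => a • (1 : H →L[ℂ] H)) = a • 1 := by
    intro a ha
    have h := G.homog n w (fun _ => 1) a hw (fun _ => honepd) ha
    rwa [hone] at h
  have hBle : ∀ j, B j ≤ M • 1 := fun j => by
    rw [← hconst M hM]
    exact G.mono n w (fun _ => M • 1) (fun i => A i j) hw
      (fun _ => posdef_of_le hM (smul_nonneg'' hM.le one_nonneg) le_rfl)
      (fun i => hA i j) (fun i => hAup i j)
  have hB0 : ∀ j, 0 ≤ B j := fun j => (posdef_iff.mp (hBpd j)).1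
  have hBu : ∀ j, IsUnit (B j) := fun j => (hBpd j).2
  -- harmonic bound for the columns
  have hiB : ∀ j, Ring.inverse (B j) ≤ ∑ i, w i • iA i j := by
    intro j
    have hD0 : 0 ≤ ∑ i, w i • iA i j :=
      Finset.sum_nonneg fun i _ => smul_nonneg'' (hwpos i).le (hiA0 i j)
    have hDge : M⁻¹ • 1 ≤ ∑ i, w i • iA i j :=
      calc M⁻¹ • (1 : H →L[ℂ] H) = ∑ i, w i • (M⁻¹ • (1 : H →L[ℂ] H)) :=
            (sum_smul_const hwsum _).symm
        _ ≤ _ := sum_smul_le (fun i _ => (hwpos i).le) (fun i _ => hiAge i j)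
    have hDu : IsUnit (∑ i, w i • iA i j) := (posdef_of_le (inv_pos.2 hM) hD0 hDge).2
    have hharm : Ring.inverse (∑ i, w i • iA i j) ≤ B j :=
      G.harm_le n w (fun i => A i j) hw (fun i => hA i j)
    have h := inv_anti (inverse_nonneg' hD0 hDu) (inverse_isUnit hDu) (hBu j) hharm
    rwa [inverse_inverse' hDu] at h
  -- the harmonic sum E
  set E : H →L[ℂ] H := ∑ j, l j • Ring.inverse (B j) with hEdef
  have hiBge : ∀ j, M⁻¹ • 1 ≤ Ring.inverse (B j) := fun j => by
    have h := inv_anti (hB0 j) (hBu j) (isUnit_smul_one hM.ne') (hBle j)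
    rwa [inverse_smul_one hM.ne'] at h
  have hE0 : 0 ≤ E := Finset.sum_nonneg fun j _ =>
    smul_nonneg'' (hlpos j).le (inverse_nonneg' (hB0 j) (hBu j))
  have hEge : M⁻¹ • 1 ≤ E :=
    calc M⁻¹ • (1 : H →L[ℂ] H) = ∑ j, l j • (M⁻¹ • (1 : H →L[ℂ] H)) :=
          (sum_smul_const hlsum _).symm
      _ ≤ E := sum_smul_le (fun j _ => (hlpos j).le) (fun j _ => hiBge j)
  have hEu : IsUnit E := (posdef_of_le (inv_pos.2 hM) hE0 hEge).2
  have hET : E ≤ T := by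
    calc E ≤ ∑ j, l j • (∑ i, w i • iA i j) :=
          sum_smul_le (fun j _ => (hlpos j).le) (fun j _ => hiB j)
      _ = T := by
          rw [hTdef, Finset.sum_comm]
          simp only [Finset.smul_sum, smul_smul, mul_comm]
  have hTE : Ring.inverse T ≤ Ring.inverse E := inv_anti hE0 hEu hTu hET
  have hfin : Ring.inverse E ≤ G.G k l B := G.harm_le k l B hl hBpd
  calc G.G n w (fun i => G.G k l (A i)) ≤ G.G n w C := step1
    _ ≤ ∑ i, w i • C i := step2
    _ = S := hSeq
    _ ≤ (M + m) • 1 - (M * m) • T := hSle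
    _ ≤ K • Ring.inverse T := hK2
    _ ≤ K • G.G k l B := smul_le_smul'' hK0 (hTE.trans hfin)
end

section
/- Let G be an ordered mean and 𝔸 = [Aᵢⱼ] an n×k array of positive definite operators with mI ≤ Aᵢⱼ ≤ MI. Then Gₙ(ω; Gₖ(λ; 𝔸¹), …, Gₖ(λ; 𝔸ⁿ)) ≤ Gₖ(λ; Gₙ(ω; 𝔸₁), …, Gₙ(ω; 𝔸ₖ)) + (√M − √m)²·I. -/
set_option maxHeartbeats 1000000
set_option synthInstance.maxHeartbeats 200000
set_option linter.unusedSectionVars false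



namespace MSB
variable {H : Type*} [NormedAddCommGroup H] [InnerProductSpace ℂ H] [CompleteSpace H]

lemma one_nonneg : (0 : H →L[ℂ] H) ≤ 1 :=
  (ContinuousLinearMap.nonneg_iff_isPositive (1 : H →L[ℂ] H)).mpr
    ContinuousLinearMap.isPositive_one

lemma smul_nonneg' {r : ℝ} (hr : 0 ≤ r) {a : H →L[ℂ] H} (ha : 0 ≤ a) :
    (0 : H →L[ℂ] H) ≤ r • a := by
  have h1 : star (Real.sqrt r • (1 : H →L[ℂ] H)) = Real.sqrt r • 1 := by simp [star_smul]
  have h2 := star_left_conjugate_nonneg ha (Real.sqrt r • (1 : H →L[ℂ] H))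
  rw [h1] at h2
  rwa [smul_mul_assoc, mul_smul_comm, one_mul, mul_one, smul_smul,
    Real.mul_self_sqrt hr] at h2

lemma smul_le_smul' {r : ℝ} (hr : 0 ≤ r) {a b : H →L[ℂ] H} (h : a ≤ b) :
    r • a ≤ r • b := by
  rw [← sub_nonneg, ← smul_sub]
  exact smul_nonneg' hr (sub_nonneg.2 h)

lemma sa_of_le {a b : H →L[ℂ] H} (hb : IsSelfAdjoint b) (h : b ≤ a) :
    IsSelfAdjoint a := by
  have h1 := ((ContinuousLinearMap.le_def b a).mp h).isSelfAdjoint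
  simpa using h1.add hb

lemma sa_smul_one (r : ℝ) : IsSelfAdjoint (r • (1 : H →L[ℂ] H)) := by
  simp [IsSelfAdjoint, star_smul]

lemma spec_lb {m : ℝ} {a : H →L[ℂ] H} (ha : IsSelfAdjoint a)
    (h : m • (1 : H →L[ℂ] H) ≤ a) : ∀ x ∈ spectrum ℝ a, m ≤ x := by
  rw [← Algebra.algebraMap_eq_smul_one] at h
  exact (algebraMap_le_iff_le_spectrum ha).mp h

lemma spec_ub {M : ℝ} {a : H →L[ℂ] H} (ha : IsSelfAdjoint a)
    (h : a ≤ M • (1 : H →L[ℂ] H)) : ∀ x ∈ spectrum ℝ a, x ≤ M := by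
  rw [← Algebra.algebraMap_eq_smul_one] at h
  exact (le_algebraMap_iff_spectrum_le ha).mp h

lemma isUnit_smul_one {r : ℝ} (hr : r ≠ 0) : IsUnit (r • (1 : H →L[ℂ] H)) :=
  ⟨⟨r • 1, r⁻¹ • 1, by simp [smul_mul_assoc, smul_smul, mul_inv_cancel₀ hr, inv_mul_cancel₀ hr],
    by simp [smul_mul_assoc, smul_smul, mul_inv_cancel₀ hr, inv_mul_cancel₀ hr]⟩, rfl⟩

lemma isUnit_of_lb {m : ℝ} (hm : 0 < m) {a : H →L[ℂ] H}
    (h : m • (1 : H →L[ℂ] H) ≤ a) : IsUnit a :=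
  CStarAlgebra.isUnit_of_le _ h ⟨smul_nonneg' hm.le one_nonneg, isUnit_smul_one hm.ne'⟩

lemma posdef_of_lb {m : ℝ} (hm : 0 < m) {a : H →L[ℂ] H}
    (h : m • (1 : H →L[ℂ] H) ≤ a) : IsPosDef a :=
  ⟨(ContinuousLinearMap.nonneg_iff_isPositive a).mp
      ((smul_nonneg' hm.le one_nonneg).trans h), isUnit_of_lb hm h⟩

lemma inv_antitone {a b : H →L[ℂ] H} (ha : 0 ≤ a) (hab : a ≤ b) (hau : IsUnit a) :
    Ring.inverse b ≤ Ring.inverse a := by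
  lift b to (H →L[ℂ] H)ˣ using CStarAlgebra.isUnit_of_le _ hab ⟨ha, hau⟩
  lift a to (H →L[ℂ] H)ˣ using hau
  rw [Ring.inverse_unit, Ring.inverse_unit]
  exact CStarAlgebra.inv_le_inv ha hab

lemma inv_nonneg' {a : H →L[ℂ] H} (ha : 0 ≤ a) (hau : IsUnit a) :
    0 ≤ Ring.inverse a := by
  lift a to (H →L[ℂ] H)ˣ using hau
  rw [Ring.inverse_unit]
  exact CFC.inv_nonneg_of_nonneg a ha

lemma inv_smul' {r : ℝ} (hr : r ≠ 0) {a : H →L[ℂ] H} (ha : IsUnit a) :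
    Ring.inverse (r • a) = r⁻¹ • Ring.inverse a := by
  lift a to (H →L[ℂ] H)ˣ using ha
  set u : (H →L[ℂ] H)ˣ :=
    ⟨r • ↑a, r⁻¹ • ↑a⁻¹,
      by rw [smul_mul_assoc, mul_smul_comm, smul_smul, Units.mul_inv,
        mul_inv_cancel₀ hr, one_smul],
      by rw [smul_mul_assoc, mul_smul_comm, smul_smul, Units.inv_mul,
        inv_mul_cancel₀ hr, one_smul]⟩ with hu
  have h1 : r • (↑a : H →L[ℂ] H) = ↑u := rfl
  rw [h1, Ring.inverse_unit u, Ring.inverse_unit a]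
  rfl

lemma inv_inv' {a : H →L[ℂ] H} (ha : IsUnit a) :
    Ring.inverse (Ring.inverse a) = a := by
  lift a to (H →L[ℂ] H)ˣ using ha
  rw [Ring.inverse_unit, Ring.inverse_unit, inv_inv]

lemma cfc_shift {a : H →L[ℂ] H} (ha : IsSelfAdjoint a)
    (hne : ∀ x ∈ spectrum ℝ a, x ≠ 0) (c : ℝ) :
    cfc (fun x : ℝ => x + c * x⁻¹) a = a + c • Ring.inverse a := by
  have hcont : ContinuousOn (fun x : ℝ => x⁻¹) (spectrum ℝ a) :=
    ContinuousOn.inv₀ continuousOn_id hne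
  rw [cfc_add a _ _ (by fun_prop) (by exact hcont.const_smul c)]
  rw [cfc_id' ℝ a, cfc_const_mul c _ a hcont]
  congr 1
  rw [show (fun x : ℝ => x⁻¹) = (fun x : ℝ => (id x)⁻¹) from rfl,
    cfc_inv (f := id) (a := a) hne, cfc_id ℝ a]

lemma kant_upper {m M : ℝ} (hm : 0 < m) {a : H →L[ℂ] H} (ha : IsSelfAdjoint a)
    (h1 : m • (1 : H →L[ℂ] H) ≤ a) (h2 : a ≤ M • (1 : H →L[ℂ] H)) :
    a + (M * m) • Ring.inverse a ≤ (M + m) • (1 : H →L[ℂ] H) := by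
  have hlb := spec_lb ha h1
  have hub := spec_ub ha h2
  have hne : ∀ x ∈ spectrum ℝ a, x ≠ 0 := fun x hx => (hm.trans_le (hlb x hx)).ne'
  have hcont : ContinuousOn (fun x : ℝ => x + M * m * x⁻¹) (spectrum ℝ a) :=
    continuousOn_id.add (continuousOn_const.mul (ContinuousOn.inv₀ continuousOn_id hne))
  rw [← cfc_shift ha hne, ← Algebra.algebraMap_eq_smul_one]
  refine cfc_le_algebraMap _ _ _ (fun x hx => ?_) hcont ha
  have hx0 : 0 < x := hm.trans_le (hlb x hx)
  have key : M + m - (x + M * m * x⁻¹) = (x - m) * (M - x) * x⁻¹ := by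
    field_simp
    ring
  have h3 : 0 ≤ (x - m) * (M - x) * x⁻¹ :=
    mul_nonneg (mul_nonneg (sub_nonneg.2 (hlb x hx)) (sub_nonneg.2 (hub x hx)))
      (inv_nonneg.2 hx0.le)
  linarith

lemma kant_lower {m c : ℝ} (hm : 0 < m) (hc : 0 ≤ c) {a : H →L[ℂ] H}
    (ha : IsSelfAdjoint a) (h1 : m • (1 : H →L[ℂ] H) ≤ a) :
    (2 * Real.sqrt c) • (1 : H →L[ℂ] H) ≤ a + c • Ring.inverse a := by
  have hlb := spec_lb ha h1
  have hne : ∀ x ∈ spectrum ℝ a, x ≠ 0 := fun x hx => (hm.trans_le (hlb x hx)).ne'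
  have hcont : ContinuousOn (fun x : ℝ => x + c * x⁻¹) (spectrum ℝ a) :=
    continuousOn_id.add (continuousOn_const.mul (ContinuousOn.inv₀ continuousOn_id hne))
  rw [← cfc_shift ha hne, ← Algebra.algebraMap_eq_smul_one]
  refine algebraMap_le_cfc _ _ _ (fun x hx => ?_) hcont ha
  have hx0 : 0 < x := hm.trans_le (hlb x hx)
  have hs : Real.sqrt c ^ 2 = c := Real.sq_sqrt hc
  have key : x + c * x⁻¹ - 2 * Real.sqrt c = (x - Real.sqrt c) ^ 2 * x⁻¹ := by
    rw [← hs]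
    field_simp
    ring_nf
    rw [hs, hs]
  have h3 : 0 ≤ (x - Real.sqrt c) ^ 2 * x⁻¹ :=
    mul_nonneg (sq_nonneg _) (inv_nonneg.2 hx0.le)
  linarith

lemma sum_smul_le {n : ℕ} {w : Fin n → ℝ} (hw : ∀ i, 0 ≤ w i)
    {B C : Fin n → H →L[ℂ] H} (h : ∀ i, B i ≤ C i) :
    ∑ i, w i • B i ≤ ∑ i, w i • C i :=
  Finset.sum_le_sum fun i _ => smul_le_smul' (hw i) (h i)

lemma sum_smul_const {n : ℕ} {w : Fin n → ℝ} (hw : ∑ i, w i = 1)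
    (x : H →L[ℂ] H) : ∑ i, w i • x = x := by
  rw [← Finset.sum_smul, hw, one_smul]

lemma double_sum {n k : ℕ} (w : Fin n → ℝ) (l : Fin k → ℝ) (r : ℝ)
    (x : Fin n → Fin k → (H →L[ℂ] H)) :
    ∑ i, w i • ∑ j, l j • (r • x i j) = r • ∑ j, l j • ∑ i, w i • x i j := by
  simp only [Finset.smul_sum, smul_smul]
  rw [Finset.sum_comm]
  exact Finset.sum_congr rfl fun j _ => Finset.sum_congr rfl fun i _ => by module

end MSB

variable {H : Type*} [NormedAddCommGroup H] [InnerProductSpace ℂ H] [CompleteSpace H]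

theorem mixture_sqrt_bound (G : OrderedMean H) {n k : ℕ} (w : Fin n → ℝ) (l : Fin k → ℝ)
    (hw : IsProbVec w) (hl : IsProbVec l) (A : Fin n → Fin k → (H →L[ℂ] H))
    (hA : ∀ i j, IsPosDef (A i j)) (m M : ℝ) (hm : 0 < m) (hmM : m ≤ M)
    (hbd : ∀ i j, m • (1 : H →L[ℂ] H) ≤ A i j ∧ A i j ≤ M • (1 : H →L[ℂ] H)) :
    G.G n w (fun i => G.G k l (A i)) ≤
      G.G k l (fun j => G.G n w (fun i => A i j)) +
        ((Real.sqrt M - Real.sqrt m) ^ 2) • (1 : H →L[ℂ] H) := by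
  classical
  obtain ⟨hw_pos, hw_sum⟩ := id hw
  obtain ⟨hl_pos, hl_sum⟩ := id hl
  have hM : 0 < M := lt_of_lt_of_le hm hmM
  have hMinv_pos : (0 : ℝ) < M⁻¹ := inv_pos.2 hM
  have hA_sa : ∀ i j, IsSelfAdjoint (A i j) := fun i j => (hA i j).1.isSelfAdjoint
  have hA_unit : ∀ i j, IsUnit (A i j) := fun i j => (hA i j).2
  have hA_nonneg : ∀ i j, (0 : H →L[ℂ] H) ≤ A i j := fun i j =>
    (MSB.smul_nonneg' hm.le MSB.one_nonneg).trans (hbd i j).1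
  set c : ℝ := (Real.sqrt M - Real.sqrt m) ^ 2 with hc_def
  -- inverse bounds for entries
  have hinv_lb : ∀ i j, M⁻¹ • (1 : H →L[ℂ] H) ≤ Ring.inverse (A i j) := by
    intro i j
    have h := MSB.inv_antitone (hA_nonneg i j) (hbd i j).2 (hA_unit i j)
    rwa [MSB.inv_smul' hM.ne' isUnit_one, Ring.inverse_one] at h
  -- the global arithmetic mean and harmonic-type sum
  set S : H →L[ℂ] H := ∑ i, w i • ∑ j, l j • A i j with hS_def
  set Rt : H →L[ℂ] H := ∑ j, l j • ∑ i, w i • Ring.inverse (A i j) with hRt_def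
  -- row bounds
  have hrow_lb : ∀ i, m • (1 : H →L[ℂ] H) ≤ ∑ j, l j • A i j := fun i =>
    calc m • (1 : H →L[ℂ] H) = ∑ j, l j • (m • (1 : H →L[ℂ] H)) :=
          (MSB.sum_smul_const hl_sum _).symm
      _ ≤ ∑ j, l j • A i j :=
          MSB.sum_smul_le (fun j => (hl_pos j).le) (fun j => (hbd i j).1)
  have hrow_ub : ∀ i, ∑ j, l j • A i j ≤ M • (1 : H →L[ℂ] H) := fun i =>
    calc ∑ j, l j • A i j ≤ ∑ j, l j • (M • (1 : H →L[ℂ] H)) :=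
          MSB.sum_smul_le (fun j => (hl_pos j).le) (fun j => (hbd i j).2)
      _ = M • (1 : H →L[ℂ] H) := MSB.sum_smul_const hl_sum _
  have hS_ub : S ≤ M • (1 : H →L[ℂ] H) := by
    rw [hS_def]
    calc ∑ i, w i • ∑ j, l j • A i j ≤ ∑ i, w i • (M • (1 : H →L[ℂ] H)) :=
          MSB.sum_smul_le (fun i => (hw_pos i).le) hrow_ub
      _ = M • (1 : H →L[ℂ] H) := MSB.sum_smul_const hw_sum _
  -- Step A : LHS ≤ S
  have hA1 : G.G n w (fun i => G.G k l (A i)) ≤ G.G n w (fun i => ∑ j, l j • A i j) :=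
    G.mono n w _ _ hw (fun i => MSB.posdef_of_lb hm (hrow_lb i))
      (fun i => G.posDef k l (A i) hl (hA i))
      (fun i => G.le_arith k l (A i) hl (hA i))
  have hA2 : G.G n w (fun i => ∑ j, l j • A i j) ≤ S :=
    G.le_arith n w _ hw (fun i => MSB.posdef_of_lb hm (hrow_lb i))
  -- Step B : Ring.inverse Rt ≤ G.G k l (columns)
  set Bc : Fin k → (H →L[ℂ] H) := fun j => G.G n w (fun i => A i j) with hBc_def
  have hBc_pd : ∀ j, IsPosDef (Bc j) := fun j => G.posDef n w _ hw (fun i => hA i j)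
  have hBc_nonneg : ∀ j, (0 : H →L[ℂ] H) ≤ Bc j := fun j =>
    (ContinuousLinearMap.nonneg_iff_isPositive _).mpr (hBc_pd j).1
  have hBc_ub : ∀ j, Bc j ≤ M • (1 : H →L[ℂ] H) := fun j =>
    (G.le_arith n w _ hw (fun i => hA i j)).trans
      (calc ∑ i, w i • A i j ≤ ∑ i, w i • (M • (1 : H →L[ℂ] H)) :=
            MSB.sum_smul_le (fun i => (hw_pos i).le) (fun i => (hbd i j).2)
        _ = M • (1 : H →L[ℂ] H) := MSB.sum_smul_const hw_sum _)
  have hcolR_lb : ∀ j, M⁻¹ • (1 : H →L[ℂ] H) ≤ ∑ i, w i • Ring.inverse (A i j) := fun j =>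
    calc M⁻¹ • (1 : H →L[ℂ] H) = ∑ i, w i • (M⁻¹ • (1 : H →L[ℂ] H)) :=
          (MSB.sum_smul_const hw_sum _).symm
      _ ≤ ∑ i, w i • Ring.inverse (A i j) :=
          MSB.sum_smul_le (fun i => (hw_pos i).le) (fun i => hinv_lb i j)
  have hcolR_nonneg : ∀ j, (0 : H →L[ℂ] H) ≤ ∑ i, w i • Ring.inverse (A i j) := fun j =>
    (MSB.smul_nonneg' hMinv_pos.le MSB.one_nonneg).trans (hcolR_lb j)
  have hcolR_unit : ∀ j, IsUnit (∑ i, w i • Ring.inverse (A i j)) := fun j =>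
    MSB.isUnit_of_lb hMinv_pos (hcolR_lb j)
  have hinvBc_le : ∀ j, Ring.inverse (Bc j) ≤ ∑ i, w i • Ring.inverse (A i j) := by
    intro j
    have h0 : (0 : H →L[ℂ] H) ≤ Ring.inverse (∑ i, w i • Ring.inverse (A i j)) :=
      MSB.inv_nonneg' (hcolR_nonneg j) (hcolR_unit j)
    have hharm : Ring.inverse (∑ i, w i • Ring.inverse (A i j)) ≤ Bc j :=
      G.harm_le n w _ hw (fun i => hA i j)
    have h2 := MSB.inv_antitone h0 hharm (isUnit_ringInverse.2 (hcolR_unit j))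
    rwa [MSB.inv_inv' (hcolR_unit j)] at h2
  have hsum_invBc_le : ∑ j, l j • Ring.inverse (Bc j) ≤ Rt := by
    rw [hRt_def]
    exact MSB.sum_smul_le (fun j => (hl_pos j).le) hinvBc_le
  have hinvBc_lb : ∀ j, M⁻¹ • (1 : H →L[ℂ] H) ≤ Ring.inverse (Bc j) := by
    intro j
    have h := MSB.inv_antitone (hBc_nonneg j) (hBc_ub j) (hBc_pd j).2
    rwa [MSB.inv_smul' hM.ne' isUnit_one, Ring.inverse_one] at h
  have hsum_invBc_lb : M⁻¹ • (1 : H →L[ℂ] H) ≤ ∑ j, l j • Ring.inverse (Bc j) :=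
    calc M⁻¹ • (1 : H →L[ℂ] H) = ∑ j, l j • (M⁻¹ • (1 : H →L[ℂ] H)) :=
          (MSB.sum_smul_const hl_sum _).symm
      _ ≤ ∑ j, l j • Ring.inverse (Bc j) :=
          MSB.sum_smul_le (fun j => (hl_pos j).le) hinvBc_lb
  have hsum_invBc_nonneg : (0 : H →L[ℂ] H) ≤ ∑ j, l j • Ring.inverse (Bc j) :=
    (MSB.smul_nonneg' hMinv_pos.le MSB.one_nonneg).trans hsum_invBc_lb
  have hB1 : Ring.inverse Rt ≤ Ring.inverse (∑ j, l j • Ring.inverse (Bc j)) :=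
    MSB.inv_antitone hsum_invBc_nonneg hsum_invBc_le
      (MSB.isUnit_of_lb hMinv_pos hsum_invBc_lb)
  have hB2 : Ring.inverse (∑ j, l j • Ring.inverse (Bc j)) ≤ G.G k l Bc :=
    G.harm_le k l Bc hl hBc_pd
  -- Step C : S ≤ Ring.inverse Rt + c • 1
  have hkant : ∀ i j, A i j + (M * m) • Ring.inverse (A i j) ≤ (M + m) • (1 : H →L[ℂ] H) :=
    fun i j => MSB.kant_upper hm (hA_sa i j) (hbd i j).1 (hbd i j).2
  have hsplit : ∑ i, w i • ∑ j, l j • (A i j + (M * m) • Ring.inverse (A i j)) =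
      S + (M * m) • Rt := by
    simp only [smul_add, Finset.sum_add_distrib]
    rw [MSB.double_sum w l (M * m) (fun i j => Ring.inverse (A i j))]
  have hC1 : S + (M * m) • Rt ≤ (M + m) • (1 : H →L[ℂ] H) := by
    rw [← hsplit]
    have hinner : ∀ i, ∑ j, l j • (A i j + (M * m) • Ring.inverse (A i j)) ≤
        (M + m) • (1 : H →L[ℂ] H) := fun i =>
      calc ∑ j, l j • (A i j + (M * m) • Ring.inverse (A i j)) ≤
            ∑ j, l j • ((M + m) • (1 : H →L[ℂ] H)) :=
          MSB.sum_smul_le (fun j => (hl_pos j).le) (fun j => hkant i j)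
        _ = (M + m) • (1 : H →L[ℂ] H) := MSB.sum_smul_const hl_sum _
    calc ∑ i, w i • ∑ j, l j • (A i j + (M * m) • Ring.inverse (A i j)) ≤
          ∑ i, w i • ((M + m) • (1 : H →L[ℂ] H)) :=
        MSB.sum_smul_le (fun i => (hw_pos i).le) hinner
      _ = (M + m) • (1 : H →L[ℂ] H) := MSB.sum_smul_const hw_sum _
  set U : H →L[ℂ] H := (M + m) • (1 : H →L[ℂ] H) - S with hU_def
  have hU_lb : m • (1 : H →L[ℂ] H) ≤ U := by
    rw [hU_def]
    have he : (M + m) • (1 : H →L[ℂ] H) - M • (1 : H →L[ℂ] H) = m • 1 := by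
      rw [← sub_smul]
      norm_num
    calc m • (1 : H →L[ℂ] H) = (M + m) • (1 : H →L[ℂ] H) - M • 1 := he.symm
      _ ≤ (M + m) • (1 : H →L[ℂ] H) - S := sub_le_sub_left hS_ub _
  have hU_sa : IsSelfAdjoint U := MSB.sa_of_le (MSB.sa_smul_one m) hU_lb
  have hRtU : (M * m) • Rt ≤ U := by
    rw [hU_def, le_sub_iff_add_le, add_comm]
    exact hC1
  have hRt_lb : M⁻¹ • (1 : H →L[ℂ] H) ≤ Rt :=
    calc M⁻¹ • (1 : H →L[ℂ] H) = ∑ j, l j • (M⁻¹ • (1 : H →L[ℂ] H)) :=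
          (MSB.sum_smul_const hl_sum _).symm
      _ ≤ Rt := by
          rw [hRt_def]
          exact MSB.sum_smul_le (fun j => (hl_pos j).le) hcolR_lb
  have hRt_unit : IsUnit Rt := MSB.isUnit_of_lb hMinv_pos hRt_lb
  have hRt_nonneg : (0 : H →L[ℂ] H) ≤ Rt :=
    (MSB.smul_nonneg' hMinv_pos.le MSB.one_nonneg).trans hRt_lb
  have hMm_pos : (0 : ℝ) < M * m := mul_pos hM hm
  have hMmRt_unit : IsUnit ((M * m) • Rt) := by
    apply MSB.isUnit_of_lb hm
    have h := MSB.smul_le_smul' hMm_pos.le hRt_lb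
    rwa [smul_smul, show M * m * M⁻¹ = m by
      rw [mul_comm M m, mul_assoc, mul_inv_cancel₀ hM.ne', mul_one]] at h
  have hinvU_le : Ring.inverse U ≤ Ring.inverse ((M * m) • Rt) :=
    MSB.inv_antitone (MSB.smul_nonneg' hMm_pos.le hRt_nonneg) hRtU hMmRt_unit
  have hMminvU : (M * m) • Ring.inverse U ≤ Ring.inverse Rt := by
    have h2 := MSB.smul_le_smul' hMm_pos.le hinvU_le
    rwa [MSB.inv_smul' hMm_pos.ne' hRt_unit, smul_smul,
      mul_inv_cancel₀ hMm_pos.ne', one_smul] at h2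
  have hKL : (2 * Real.sqrt (M * m)) • (1 : H →L[ℂ] H) ≤ U + (M * m) • Ring.inverse U :=
    MSB.kant_lower hm hMm_pos.le hU_sa hU_lb
  have hc_eq : M + m - 2 * Real.sqrt (M * m) = c := by
    rw [hc_def, Real.sqrt_mul hM.le, sub_sq, Real.sq_sqrt hM.le, Real.sq_sqrt hm.le]
    ring
  have hSC : S ≤ Ring.inverse Rt + c • (1 : H →L[ℂ] H) := by
    have h3 : (2 * Real.sqrt (M * m)) • (1 : H →L[ℂ] H) ≤ U + Ring.inverse Rt :=
      hKL.trans (add_le_add_right hMminvU U)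
    rw [hU_def] at h3
    have h5 := add_le_add_left h3 S
    have h6 : ((M + m) • (1 : H →L[ℂ] H) - S + Ring.inverse Rt) + S =
        Ring.inverse Rt + (M + m) • (1 : H →L[ℂ] H) := by abel
    rw [h6] at h5
    calc S = ((2 * Real.sqrt (M * m)) • (1 : H →L[ℂ] H) + S) -
            (2 * Real.sqrt (M * m)) • (1 : H →L[ℂ] H) := by abel
      _ ≤ (Ring.inverse Rt + (M + m) • (1 : H →L[ℂ] H)) -
            (2 * Real.sqrt (M * m)) • (1 : H →L[ℂ] H) := sub_le_sub_right h5 _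
      _ = Ring.inverse Rt + ((M + m) • (1 : H →L[ℂ] H) -
            (2 * Real.sqrt (M * m)) • (1 : H →L[ℂ] H)) := by abel
      _ = Ring.inverse Rt + c • (1 : H →L[ℂ] H) := by rw [← sub_smul, hc_eq]
  -- final chain
  calc G.G n w (fun i => G.G k l (A i)) ≤ S := hA1.trans hA2
    _ ≤ Ring.inverse Rt + c • (1 : H →L[ℂ] H) := hSC
    _ ≤ G.G k l Bc + c • (1 : H →L[ℂ] H) :=
        add_le_add_left (hB1.trans hB2) _
end

section
/- Let G be an ordered mean and for μ < 0 define G^μ(ω; A) := (G^{−μ}(ω; A₁⁻¹, …, Aₙ⁻¹))⁻¹ where G^ν for ν ≥ 0 is the parameterized ordered mean G^ν(ω; A) = G(ω; A + νI) − νI. Then for any a > 0 and μ < 0, G^μ(ω; aA₁, …, aAₙ) = a·G^{aμ}(ω; A₁, …, Aₙ). -/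
variable {H : Type*} [NormedAddCommGroup H] [InnerProductSpace ℂ H] [CompleteSpace H]


lemma isUnit_smul_clm {c : ℝ} (hc : c ≠ 0) {X : H →L[ℂ] H} (h : IsUnit X) : IsUnit (c • X) := by
  obtain ⟨u, rfl⟩ := h
  exact ⟨⟨c • ↑u, c⁻¹ • ↑u⁻¹,
    by simp [smul_mul_assoc, mul_smul_comm, smul_smul, mul_inv_cancel₀ hc, inv_mul_cancel₀ hc],
    by simp [smul_mul_assoc, mul_smul_comm, smul_smul, mul_inv_cancel₀ hc, inv_mul_cancel₀ hc]⟩,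
    rfl⟩

lemma ringInverse_smul_clm {c : ℝ} (hc : c ≠ 0) (X : H →L[ℂ] H) :
    Ring.inverse (c • X) = c⁻¹ • Ring.inverse X := by
  by_cases hX : IsUnit X
  · obtain ⟨u, rfl⟩ := hX
    have hu : Ring.inverse ((u : H →L[ℂ] H)) = ↑u⁻¹ := Ring.inverse_unit u
    let v : (H →L[ℂ] H)ˣ := ⟨c • ↑u, c⁻¹ • ↑u⁻¹,
      by simp [smul_mul_assoc, mul_smul_comm, smul_smul, mul_inv_cancel₀ hc, inv_mul_cancel₀ hc],
      by simp [smul_mul_assoc, mul_smul_comm, smul_smul, mul_inv_cancel₀ hc, inv_mul_cancel₀ hc]⟩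
    have : Ring.inverse ((v : H →L[ℂ] H)) = ↑v⁻¹ := Ring.inverse_unit v
    simpa [v, hu] using this
  · have h1 : ¬ IsUnit (c • X) := fun hcu => hX <| by
      have := isUnit_smul_clm (inv_ne_zero hc) hcu
      rwa [smul_smul, inv_mul_cancel₀ hc, one_smul] at this
    rw [Ring.inverse_non_unit _ hX, Ring.inverse_non_unit _ h1, smul_zero]

lemma isPositive_smul_one {ν : ℝ} (hν : 0 ≤ ν) : (ν • (1 : H →L[ℂ] H)).IsPositive := by
  constructor
  · rw [← ContinuousLinearMap.isSelfAdjoint_iff_isSymmetric, IsSelfAdjoint, star_smul, star_trivial, star_one]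
  · intro x
    simp only [ContinuousLinearMap.reApplyInnerSelf, ContinuousLinearMap.smul_apply,
      ContinuousLinearMap.one_apply]
    rw [RCLike.real_smul_eq_coe_smul (K := ℂ), inner_smul_left]
    simp only [RCLike.conj_ofReal, RCLike.re_ofReal_mul, inner_self_eq_norm_sq]
    positivity

lemma isPosDef_ringInverse {X : H →L[ℂ] H} (h : IsPosDef X) : IsPosDef (Ring.inverse X) := by
  obtain ⟨hpos, hu⟩ := h
  obtain ⟨u, rfl⟩ := hu
  rw [Ring.inverse_unit]
  refine ⟨?_, u⁻¹.isUnit⟩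
  rw [← ContinuousLinearMap.nonneg_iff_isPositive] at hpos ⊢
  exact CFC.inv_nonneg_of_nonneg u hpos

lemma isPosDef_add_smul_one {X : H →L[ℂ] H} (h : IsPosDef X) {ν : ℝ} (hν : 0 < ν) :
    IsPosDef (X + ν • 1) := by
  have h1 : (ν • (1 : H →L[ℂ] H)).IsPositive := isPositive_smul_one hν.le
  refine ⟨h.1.add h1, ?_⟩
  have hle : ν • (1 : H →L[ℂ] H) ≤ X + ν • 1 := by
    rw [le_add_iff_nonneg_left]
    exact (ContinuousLinearMap.nonneg_iff_isPositive _).mpr h.1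
  exact CStarAlgebra.isUnit_of_le _ hle (IsStrictlyPositive.iff_of_unital.mpr
    ⟨(ContinuousLinearMap.nonneg_iff_isPositive _).mpr h1, isUnit_smul_clm hν.ne' isUnit_one⟩)

set_option synthInstance.maxHeartbeats 1000000 in
theorem pMean_homog_neg (G : OrderedMean H) {n : ℕ} (w : Fin n → ℝ) (hw : IsProbVec w)
    (A : Fin n → (H →L[ℂ] H)) (hA : ∀ i, IsPosDef (A i))
    (a μ : ℝ) (ha : 0 < a) (hμ : μ < 0) :
    G.pMean μ n w (fun i => a • A i) = a • G.pMean (a * μ) n w A := by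
  have haμ : a * μ < 0 := mul_neg_of_pos_of_neg ha hμ
  have hB : ∀ i, IsPosDef (Ring.inverse (A i) + (-(a * μ)) • (1 : H →L[ℂ] H)) :=
    fun i => isPosDef_add_smul_one (isPosDef_ringInverse (hA i)) (by linarith)
  have harg : (fun i => Ring.inverse (a • A i) + (-μ) • (1 : H →L[ℂ] H))
      = fun i => a⁻¹ • (Ring.inverse (A i) + (-(a * μ)) • 1) := by
    funext i
    rw [ringInverse_smul_clm ha.ne' (A i), smul_add, smul_smul]
    congr 2
    field_simp
  simp only [OrderedMean.pMean, if_neg (not_le.mpr hμ), if_neg (not_le.mpr haμ)]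
  rw [harg, G.homog n w _ a⁻¹ hw hB (inv_pos.mpr ha)]
  have key : a⁻¹ • G.G n w (fun i => Ring.inverse (A i) + (-(a * μ)) • 1)
        - (-μ) • (1 : H →L[ℂ] H)
      = a⁻¹ • (G.G n w (fun i => Ring.inverse (A i) + (-(a * μ)) • 1) - (-(a * μ)) • 1) := by
    rw [smul_sub, smul_smul]
    congr 3
    field_simp
  rw [key, ringInverse_smul_clm (inv_ne_zero ha.ne'), inv_inv]
end

section
/- Let G be an ordered mean and G^μ the parameterized ordered mean for μ ≥ 0. Then the harmonic–G^μ–arithmetic mean inequalities hold: (∑ᵢ wᵢAᵢ⁻¹)⁻¹ ≤ G^μ(ω; A₁,…,Aₙ) ≤ ∑ᵢ wᵢAᵢ. -/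
variable {H : Type*} [NormedAddCommGroup H] [InnerProductSpace ℂ H] [CompleteSpace H]


set_option synthInstance.maxHeartbeats 1000000 in
set_option maxHeartbeats 1000000 in
open ContinuousLinearMap in
lemma aux_smul_one_unit {μ : ℝ} (hμ : 0 < μ) :
    ((μ : ℝ) • (1 : H →L[ℂ] H)) * (μ⁻¹ • 1) = 1 ∧
      ((μ⁻¹ : ℝ) • (1 : H →L[ℂ] H)) * (μ • 1) = 1 :=
  ⟨by rw [smul_mul_assoc, one_mul, smul_smul, mul_inv_cancel₀ hμ.ne', one_smul],
   by rw [smul_mul_assoc, one_mul, smul_smul, inv_mul_cancel₀ hμ.ne', one_smul]⟩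

set_option synthInstance.maxHeartbeats 1000000 in
set_option maxHeartbeats 1000000 in
open ContinuousLinearMap in
lemma aux_ringinv {μ : ℝ} (hμ : 0 < μ) :
    Ring.inverse ((μ : ℝ) • (1 : H →L[ℂ] H)) = μ⁻¹ • 1 :=
  Ring.inverse_unit ⟨μ • 1, μ⁻¹ • 1, (aux_smul_one_unit hμ).1, (aux_smul_one_unit hμ).2⟩

set_option synthInstance.maxHeartbeats 1000000 in
set_option maxHeartbeats 1000000 in
open ContinuousLinearMap in
lemma aux_isPositive_smul {c : ℝ} (hc : 0 ≤ c) {T : H →L[ℂ] H} (hT : T.IsPositive) :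
    (c • T).IsPositive := by
  have h := hT.smul_of_nonneg (c := (c : ℂ)) (by exact_mod_cast hc)
  rwa [Complex.coe_smul] at h

open ContinuousLinearMap in
lemma aux_le_iff {f g : H →L[ℂ] H} : f ≤ g ↔ (g - f).IsPositive := Iff.rfl

open ContinuousLinearMap in
lemma aux_add_le_add_right {f g : H →L[ℂ] H} (h : f ≤ g) (c : H →L[ℂ] H) :
    f + c ≤ g + c := by
  rw [aux_le_iff] at h ⊢
  rwa [add_sub_add_right_eq_sub]

open ContinuousLinearMap in
lemma aux_sub_le_sub_right {f g : H →L[ℂ] H} (h : f ≤ g) (c : H →L[ℂ] H) :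
    f - c ≤ g - c := by
  rw [aux_le_iff] at h ⊢
  rwa [sub_sub_sub_cancel_right]

set_option synthInstance.maxHeartbeats 1000000 in
set_option maxHeartbeats 1000000 in
open ContinuousLinearMap in
lemma aux_smul_cancel {c : ℝ} (hc : 0 < c) {f g : H →L[ℂ] H} (h : c • f ≤ c • g) :
    f ≤ g := by
  rw [aux_le_iff, ← smul_sub] at h
  rw [aux_le_iff]
  have h2 := aux_isPositive_smul (inv_nonneg.mpr hc.le) h
  rwa [smul_smul, inv_mul_cancel₀ hc.ne', one_smul] at h2

set_option synthInstance.maxHeartbeats 1000000 in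
set_option maxHeartbeats 1000000 in
open ContinuousLinearMap in
lemma aux_isPosDef_add_smul_one {A : H →L[ℂ] H} (hA : A.IsPositive) {μ : ℝ} (hμ : 0 < μ) :
    IsPosDef (A + μ • 1) := by
  refine ⟨hA.add (aux_isPositive_smul hμ.le isPositive_one), ?_⟩
  refine isUnit_of_forall_le_norm_inner_map _ (c := ⟨μ, hμ.le⟩) hμ fun x => ?_
  have h1 : RCLike.re (inner ℂ ((A + μ • 1) x) x : ℂ)
      = RCLike.re (inner ℂ (A x) x : ℂ) + μ * ‖x‖ ^ 2 := by
    simp only [add_apply, smul_apply, one_apply, inner_add_left, map_add]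
    rw [RCLike.real_smul_eq_coe_smul (K := ℂ), inner_smul_left, RCLike.conj_ofReal,
      RCLike.re_ofReal_mul, ContinuousLinearMap.one_apply, inner_self_eq_norm_sq]
  have h2 : ‖x‖ ^ 2 * μ ≤ RCLike.re (inner ℂ ((A + μ • 1) x) x : ℂ) := by
    rw [h1, mul_comm]
    have := hA.re_inner_nonneg_left x
    linarith
  calc (‖x‖ : ℝ) ^ 2 * ((⟨μ, hμ.le⟩ : NNReal) : ℝ)
      ≤ RCLike.re (inner ℂ ((A + μ • 1) x) x : ℂ) := h2
    _ ≤ ‖(inner ℂ ((A + μ • 1) x) x : ℂ)‖ := RCLike.re_le_norm _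

set_option synthInstance.maxHeartbeats 1000000 in
set_option maxHeartbeats 1000000 in

theorem pMean_am_hm (G : OrderedMean H) {n : ℕ} (w : Fin n → ℝ) (hw : IsProbVec w)
    (A : Fin n → (H →L[ℂ] H)) (hA : ∀ i, IsPosDef (A i)) (μ : ℝ) (hμ : 0 ≤ μ) :
    Ring.inverse (∑ i, w i • Ring.inverse (A i)) ≤ G.pMean μ n w A ∧
      G.pMean μ n w A ≤ ∑ i, w i • A i := by
  rw [OrderedMean.pMean, if_pos hμ]
  rcases hμ.eq_or_lt with h0 | h0
  · simp only [← h0, zero_smul, add_zero, sub_zero]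
    exact ⟨G.harm_le n w A hw hA, G.le_arith n w A hw hA⟩
  -- now 0 < μ
  set C : Fin n → (H →L[ℂ] H) := fun _ => μ • 1 with hC
  have hsum_const : ∀ c : H →L[ℂ] H, ∑ i, w i • c = c := fun c => by
    rw [← Finset.sum_smul, hw.2, one_smul]
  have hCpd : ∀ i, IsPosDef (C i) := fun i =>
    ⟨aux_isPositive_smul h0.le ContinuousLinearMap.isPositive_one,
     ⟨⟨μ • 1, μ⁻¹ • 1, (aux_smul_one_unit h0).1, (aux_smul_one_unit h0).2⟩, rfl⟩⟩
  have hBpd : ∀ i, IsPosDef (A i + μ • 1) := fun i =>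
    aux_isPosDef_add_smul_one (hA i).1 h0
  -- G of the constant family equals μ • 1
  have hGC : G.G n w C = μ • 1 := by
    refine le_antisymm ?_ ?_
    · have h := G.le_arith n w C hw hCpd
      rwa [hsum_const] at h
    · have h := G.harm_le n w C hw hCpd
      rw [hC] at h
      simp only [aux_ringinv h0, hsum_const, aux_ringinv (inv_pos.mpr h0), inv_inv] at h
      exact h
  -- key superadditivity step
  have hkey : G.G n w A + μ • 1 ≤ G.G n w (fun i => A i + μ • 1) := by
    have hconc := G.concave n w A C (1/2) hw hA hCpd (by norm_num) (by norm_num)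
    have hfun : (fun i => (1 - 1/2 : ℝ) • A i + (1/2 : ℝ) • C i)
        = fun i => (1/2 : ℝ) • (A i + μ • 1) := by
      funext i
      rw [hC, smul_add]
      norm_num
    rw [hfun, G.homog n w (fun i => A i + μ • 1) (1/2) hw hBpd (by norm_num), hGC] at hconc
    have h2 : (1/2 : ℝ) • (G.G n w A + μ • 1)
        ≤ (1/2 : ℝ) • G.G n w (fun i => A i + μ • 1) := by
      rw [smul_add]
      convert hconc using 2
      norm_num
    exact aux_smul_cancel (by norm_num) h2
  constructor
  · have h1 : Ring.inverse (∑ i, w i • Ring.inverse (A i)) + μ • 1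
        ≤ G.G n w (fun i => A i + μ • 1) :=
      le_trans (aux_add_le_add_right (G.harm_le n w A hw hA) (μ • 1)) hkey
    have h2 := aux_sub_le_sub_right h1 (μ • 1)
    rwa [add_sub_cancel_right] at h2
  · have h1 : G.G n w (fun i => A i + μ • 1) ≤ (∑ i, w i • A i) + μ • 1 := by
      have h := G.le_arith n w (fun i => A i + μ • 1) hw hBpd
      rwa [show ∑ i, w i • (A i + μ • 1) = (∑ i, w i • A i) + μ • (1 : H →L[ℂ] H) by
        simp only [smul_add, Finset.sum_add_distrib, ← Finset.sum_smul, hw.2, one_smul]] at h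
    have h2 := aux_sub_le_sub_right h1 (μ • 1)
    rwa [add_sub_cancel_right] at h2
end

section
/- Let G be an ordered mean, 𝔸 = [Aᵢⱼ] an n×k array of positive definite operators, ω ∈ Δₙ, λ ∈ Δₖ, and μ₁,…,μₙ ≥ 0. Then ∑ᵢ wᵢ·G^{μᵢ}ₖ(λ; 𝔸ⁱ) ≤ G^{ω•μ}ₖ(λ; ∑ᵢ wᵢ𝔸ⁱ), where ω•μ = ∑ᵢ wᵢμᵢ and ∑ᵢ wᵢ𝔸ⁱ denotes the tuple (∑ᵢ wᵢAᵢ₁, …, ∑ᵢ wᵢAᵢₖ). -/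
set_option maxHeartbeats 1000000
set_option synthInstance.maxHeartbeats 400000

variable {H : Type*} [NormedAddCommGroup H] [InnerProductSpace ℂ H] [CompleteSpace H]

section Aux

open ContinuousLinearMap RCLike

lemma myIsPositive_smul {P : H →L[ℂ] H} (hP : P.IsPositive) {a : ℝ} (ha : 0 ≤ a) :
    (a • P).IsPositive := by
  rw [real_smul_eq_coe_smul (K := ℂ)]
  have h1 : IsSelfAdjoint ((a : ℂ) • P) := by
    rw [IsSelfAdjoint, star_smul, RCLike.star_def, hP.isSelfAdjoint.star_eq]
    simp [RCLike.conj_ofReal]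
  refine isPositive_def'.mpr ⟨h1, fun x => ?_⟩
  rw [reApplyInnerSelf, coe_smul', Pi.smul_apply, inner_smul_left,
    RCLike.conj_ofReal, re_ofReal_mul]
  exact mul_nonneg ha (hP.2 x)

lemma myLoewner_smul {X Y : H →L[ℂ] H} (h : X ≤ Y) {a : ℝ} (ha : 0 ≤ a) : a • X ≤ a • Y := by
  rw [le_def] at h ⊢
  rw [← smul_sub]
  exact myIsPositive_smul h ha

lemma myLoewner_add {X Y Z W : H →L[ℂ] H} (h : X ≤ Y) (h' : Z ≤ W) : X + Z ≤ Y + W := by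
  rw [le_def] at h h' ⊢
  have := h.add h'
  convert this using 1
  abel

lemma myCoercive {A : H →L[ℂ] H} (hA : IsPosDef A) :
    ∃ c : ℝ, 0 < c ∧ ∀ x : H, c * ‖x‖ ^ 2 ≤ re (inner ℂ (A x) x) := by
  obtain ⟨hpos, hunit⟩ := hA
  obtain ⟨S, hS, -, hSS⟩ :=
    CFC.exists_sqrt_of_isSelfAdjoint_of_quasispectrumRestricts hpos.isSelfAdjoint hpos.spectrumRestricts
  obtain ⟨u, hu⟩ := hunit
  set B : H →L[ℂ] H := (↑u⁻¹ : H →L[ℂ] H) with hB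
  set K : ℝ := ‖B ∘L S‖ with hK
  refine ⟨((K + 1) ^ 2)⁻¹, by positivity, fun x => ?_⟩
  have hAx : A x = S (S x) := by rw [← hSS]; rfl
  have h1 : re (inner ℂ (A x) x) = ‖S x‖ ^ 2 := by
    have hadj := adjoint_inner_left S (S x) x
    rw [isSelfAdjoint_iff'.mp hS] at hadj
    rw [hAx, inner_re_symm, ← hadj, inner_self_eq_norm_sq]
  have h2 : ‖x‖ ≤ (K + 1) * ‖S x‖ := by
    have hx : x = (B ∘L S) (S x) := by
      have : B.comp A = 1 := by rw [← hu, hB, ← ContinuousLinearMap.mul_def, u.inv_mul]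
      calc x = (B.comp A) x := by rw [this]; rfl
        _ = (B ∘L S) (S x) := by simp [comp_apply, hAx]
    calc ‖x‖ = ‖(B ∘L S) (S x)‖ := by rw [← hx]
      _ ≤ K * ‖S x‖ := (B ∘L S).le_opNorm _
      _ ≤ (K + 1) * ‖S x‖ := by nlinarith [norm_nonneg (S x)]
  rw [h1]
  have h3 : ‖x‖ ^ 2 ≤ (K + 1) ^ 2 * ‖S x‖ ^ 2 := by nlinarith [norm_nonneg x, norm_nonneg (S x)]
  have hKpos : (0:ℝ) < (K + 1) ^ 2 := by positivity
  rw [inv_mul_le_iff₀ hKpos]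
  linarith

lemma IsPosDef.add_pos {A B : H →L[ℂ] H} (hA : IsPosDef A) (hB : B.IsPositive) :
    IsPosDef (A + B) := by
  obtain ⟨c, hc, hco⟩ := myCoercive hA
  refine ⟨hA.1.add hB, ?_⟩
  refine isUnit_of_forall_le_norm_inner_map _ (c := ⟨c, hc.le⟩) hc fun x => ?_
  calc ‖x‖ ^ 2 * c = c * ‖x‖ ^ 2 := mul_comm _ _
    _ ≤ re (inner ℂ (A x) x) := hco x
    _ ≤ re (inner ℂ ((A + B) x) x) := by
        rw [add_apply, inner_add_left, map_add]
        simpa using hB.re_inner_nonneg_left x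
    _ ≤ ‖(inner ℂ ((A + B) x) x)‖ := RCLike.re_le_norm _

lemma IsPosDef.smul_pos {A : H →L[ℂ] H} (hA : IsPosDef A) {a : ℝ} (ha : 0 < a) :
    IsPosDef (a • A) := by
  refine ⟨myIsPositive_smul hA.1 ha.le, ?_⟩
  obtain ⟨u, hu⟩ := hA.2
  refine ⟨⟨a • A, a⁻¹ • (↑u⁻¹ : H →L[ℂ] H), ?_, ?_⟩, rfl⟩
  · rw [smul_mul_assoc, mul_smul_comm, smul_smul, mul_inv_cancel₀ ha.ne', one_smul,
      ← hu, u.mul_inv]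
  · rw [smul_mul_assoc, mul_smul_comm, smul_smul, inv_mul_cancel₀ ha.ne', one_smul,
      ← hu, u.inv_mul]

lemma myIsPositive_sum {m : ℕ} (f : Fin m → (H →L[ℂ] H)) (hf : ∀ i, (f i).IsPositive) :
    (∑ i, f i).IsPositive :=
  Finset.sum_induction f _ (fun _ _ ha hb => ha.add hb) isPositive_zero (fun i _ => hf i)

lemma isPosDef_convex {m : ℕ} (v : Fin (m + 1) → ℝ) (hv : ∀ i, 0 < v i)
    (B : Fin (m + 1) → (H →L[ℂ] H)) (hB : ∀ i, IsPosDef (B i)) :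
    IsPosDef (∑ i, v i • B i) := by
  rw [Fin.sum_univ_succ]
  exact ((hB 0).smul_pos (hv 0)).add_pos
    (myIsPositive_sum _ fun i => myIsPositive_smul (hB _).1 (hv _).le)

lemma myKey (G : OrderedMean H) :
    ∀ (n : ℕ) {k : ℕ} (w : Fin n → ℝ) (l : Fin k → ℝ), IsProbVec w → IsProbVec l →
    ∀ B : Fin n → Fin k → (H →L[ℂ] H), (∀ i j, IsPosDef (B i j)) →
    ∑ i, w i • G.G k l (B i) ≤ G.G k l (fun j => ∑ i, w i • B i j) := by
  intro n
  induction n with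
  | zero => intro k w l hw hl B hB; exact absurd hw.2 (by simp)
  | succ n ih =>
    intro k w l hw hl B hB
    rcases Nat.eq_zero_or_pos n with hn | hn
    · subst hn
      have hw0 : w 0 = 1 := by simpa using hw.2
      simp [Fin.sum_univ_one, hw0]
    · obtain ⟨m, rfl⟩ := Nat.exists_eq_succ_of_ne_zero hn.ne'
      set s : ℝ := w (Fin.last (m + 1)) with hs
      set t : ℝ := ∑ i : Fin (m + 1), w i.castSucc with ht
      have hts : t + s = 1 := by
        have := hw.2
        rwa [Fin.sum_univ_castSucc] at this
      have htpos : 0 < t := Finset.sum_pos (fun i _ => hw.1 _) ⟨0, Finset.mem_univ _⟩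
      have hspos : 0 < s := hw.1 _
      have hs1 : s ≤ 1 := by linarith
      have h1s : 1 - s = t := by linarith
      set w' : Fin (m + 1) → ℝ := fun i => w i.castSucc / t with hw'def
      have hw' : IsProbVec w' := by
        refine ⟨fun i => div_pos (hw.1 _) htpos, ?_⟩
        rw [hw'def, ← Finset.sum_div, ← ht, div_self htpos.ne']
      set C : Fin k → (H →L[ℂ] H) := fun j => ∑ i : Fin (m + 1), w' i • B i.castSucc j with hC
      have hCpos : ∀ j, IsPosDef (C j) :=
        fun j => isPosDef_convex w' (fun i => div_pos (hw.1 _) htpos) _ (fun i => hB _ j)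
      have hscal : ∀ a : ℝ, t * (a / t) = a := fun a => by field_simp
      have step1 : ∑ i : Fin (m + 2), w i • G.G k l (B i)
          = t • (∑ i : Fin (m + 1), w' i • G.G k l (B i.castSucc))
            + s • G.G k l (B (Fin.last (m + 1))) := by
        rw [Fin.sum_univ_castSucc, Finset.smul_sum]
        congr 1
        refine Finset.sum_congr rfl fun i _ => ?_
        rw [smul_smul, hw'def, hscal]
      have step2 : t • (∑ i : Fin (m + 1), w' i • G.G k l (B i.castSucc)) ≤ t • G.G k l C :=
        myLoewner_smul (ih w' l hw' hl (fun i => B i.castSucc) (fun i j => hB _ j)) htpos.le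
      have step4 := G.concave k l C (B (Fin.last (m + 1))) s hl hCpos
        (fun j => hB _ j) hspos.le hs1
      rw [h1s] at step4
      have harg : (fun j => t • C j + s • B (Fin.last (m + 1)) j)
          = fun j => ∑ i : Fin (m + 2), w i • B i j := by
        funext j
        rw [Fin.sum_univ_castSucc, hC]
        congr 1
        rw [Finset.smul_sum]
        refine Finset.sum_congr rfl fun i _ => ?_
        rw [smul_smul, hw'def, hscal]
      rw [harg] at step4
      calc ∑ i : Fin (m + 2), w i • G.G k l (B i)
          = t • (∑ i : Fin (m + 1), w' i • G.G k l (B i.castSucc))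
            + s • G.G k l (B (Fin.last (m + 1))) := step1
        _ ≤ t • G.G k l C + s • G.G k l (B (Fin.last (m + 1))) := myLoewner_add step2 le_rfl
        _ ≤ G.G k l (fun j => ∑ i : Fin (m + 2), w i • B i j) := step4

end Aux

open ContinuousLinearMap in
theorem pMean_concave_mixture (G : OrderedMean H) {n k : ℕ} (w : Fin n → ℝ)
    (l : Fin k → ℝ) (hw : IsProbVec w) (hl : IsProbVec l)
    (A : Fin n → Fin k → (H →L[ℂ] H)) (hA : ∀ i j, IsPosDef (A i j))
    (μ : Fin n → ℝ) (hμ : ∀ i, 0 ≤ μ i) :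
    ∑ i, w i • G.pMean (μ i) k l (A i) ≤
      G.pMean (∑ i, w i * μ i) k l (fun j => ∑ i, w i • A i j) := by
  have hμs : 0 ≤ ∑ i, w i * μ i :=
    Finset.sum_nonneg fun i _ => mul_nonneg (hw.1 i).le (hμ i)
  simp only [OrderedMean.pMean, hμ, hμs, if_true]
  have hBpd : ∀ i (j : Fin k), IsPosDef (A i j + μ i • 1) :=
    fun i j => (hA i j).add_pos (myIsPositive_smul isPositive_one (hμ i))
  have hkey := myKey G n w l hw hl (fun i j => A i j + μ i • 1) hBpd
  have harg : (fun j => ∑ i, w i • (A i j + μ i • (1 : H →L[ℂ] H)))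
      = fun j => (∑ i, w i • A i j) + (∑ i, w i * μ i) • (1 : H →L[ℂ] H) := by
    funext j
    simp only [smul_add, Finset.sum_add_distrib]
    congr 1
    rw [Finset.sum_smul]
    exact Finset.sum_congr rfl fun i _ => smul_smul (w i) (μ i) (1 : H →L[ℂ] H)
  rw [harg] at hkey
  have hL : (∑ i, w i • (G.G k l (fun j => A i j + μ i • 1) - μ i • 1))
      = (∑ i, w i • G.G k l (fun j => A i j + μ i • 1))
        - (∑ i, w i * μ i) • (1 : H →L[ℂ] H) := by
    simp only [smul_sub, Finset.sum_sub_distrib]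
    congr 1
    rw [Finset.sum_smul]
    exact Finset.sum_congr rfl fun i _ => smul_smul (w i) (μ i) (1 : H →L[ℂ] H)
  rw [hL]
  rw [ContinuousLinearMap.le_def] at hkey ⊢
  convert hkey using 1
  abel
end

section
/- Let G be an ordered mean with parameterized means G^μ. For positive definite operators A₁,…,Aₙ, a probability vector ω, any μ, ν ≥ 0, and t ∈ [0,1]: (1−t)·G^μ(ω; A) + t·G^ν(ω; A) ≤ G^{(1−t)μ + tν}(ω; A). -/
lemma isPositive_smul_one_s16 {H : Type*} [NormedAddCommGroup H] [InnerProductSpace ℂ H]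
    [CompleteSpace H] {μ : ℝ} (hμ : 0 ≤ μ) : (μ • (1 : H →L[ℂ] H)).IsPositive := by
  have h : (μ • (1 : H →L[ℂ] H)) = algebraMap ℝ _ μ := (Algebra.algebraMap_eq_smul_one μ).symm
  rw [h]
  constructor
  · exact (IsSelfAdjoint.algebraMap (H →L[ℂ] H) (star_trivial μ)).isSymmetric
  · intro x
    have h2 : (algebraMap ℝ (H →L[ℂ] H) μ) x = ((μ : ℂ)) • x := by
      simp [Algebra.algebraMap_eq_smul_one]
    rw [ContinuousLinearMap.reApplyInnerSelf_apply, h2, inner_smul_left (𝕜 := ℂ)]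
    simp only [RCLike.re_to_complex, Complex.conj_ofReal, Complex.re_ofReal_mul]
    exact mul_nonneg hμ (by simpa [RCLike.re_to_complex] using inner_self_nonneg (𝕜 := ℂ) (x := x))

lemma isPosDef_add_smul_one_s16 {H : Type*} [NormedAddCommGroup H] [InnerProductSpace ℂ H]
    [CompleteSpace H] {A : H →L[ℂ] H} (hA : IsPosDef A) {μ : ℝ} (hμ : 0 ≤ μ) :
    IsPosDef (A + μ • 1) := by
  refine ⟨hA.1.add (isPositive_smul_one_s16 hμ), ?_⟩
  have hspec : ∀ x ∈ spectrum ℝ A, 0 ≤ x :=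
    spectrum_nonneg_of_nonneg ((ContinuousLinearMap.nonneg_iff_isPositive A).2 hA.1)
  have hmem : (-μ) ∉ spectrum ℝ A := by
    intro hmemm
    have h1 : 0 ≤ -μ := hspec _ hmemm
    have h0 : μ = 0 := le_antisymm (by linarith) hμ
    subst h0
    rw [neg_zero] at hmemm
    exact (spectrum.zero_mem_iff ℝ).1 hmemm hA.2
  have hU := spectrum.notMem_iff.mp hmem
  have heq : A + μ • 1 = -(algebraMap ℝ (H →L[ℂ] H) (-μ) - A) := by
    rw [Algebra.algebraMap_eq_smul_one, neg_smul]; abel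
  rw [heq]
  exact hU.neg

variable {H : Type*} [NormedAddCommGroup H] [InnerProductSpace ℂ H] [CompleteSpace H]

theorem pMean_param_concave (G : OrderedMean H) {n : ℕ} (w : Fin n → ℝ) (hw : IsProbVec w)
    (A : Fin n → (H →L[ℂ] H)) (hA : ∀ i, IsPosDef (A i))
    (μ ν t : ℝ) (hμ : 0 ≤ μ) (hν : 0 ≤ ν) (ht0 : 0 ≤ t) (ht1 : t ≤ 1) :
    (1 - t) • G.pMean μ n w A + t • G.pMean ν n w A ≤
      G.pMean ((1 - t) * μ + t * ν) n w A := by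

  have hc : 0 ≤ (1 - t) * μ + t * ν :=
    add_nonneg (mul_nonneg (by linarith) hμ) (mul_nonneg ht0 hν)
  simp only [OrderedMean.pMean, if_pos hμ, if_pos hν, if_pos hc]
  have hAμ : ∀ i, IsPosDef (A i + μ • 1) := fun i => isPosDef_add_smul_one_s16 (hA i) hμ
  have hAν : ∀ i, IsPosDef (A i + ν • 1) := fun i => isPosDef_add_smul_one_s16 (hA i) hν
  have key := G.concave n w (fun i => A i + μ • 1) (fun i => A i + ν • 1) t hw hAμ hAν ht0 ht1
  have hfun : (fun i => (1 - t) • (A i + μ • 1) + t • (A i + ν • 1))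
      = fun i => A i + ((1 - t) * μ + t * ν) • (1 : H →L[ℂ] H) := by
    funext i; module
  rw [hfun] at key
  have hlin : (1 - t) • (G.G n w (fun i => A i + μ • 1) - μ • 1)
        + t • (G.G n w (fun i => A i + ν • 1) - ν • 1)
      = ((1 - t) • G.G n w (fun i => A i + μ • 1) + t • G.G n w (fun i => A i + ν • 1))
        - ((1 - t) * μ + t * ν) • (1 : H →L[ℂ] H) := by
    module
  rw [hlin]
  exact sub_le_sub_right key _
end

section
/- Let G be an ordered mean with parameterized means G^μ defined by G^μ(ω; A) := (G^{−μ}(ω; A⁻¹))⁻¹ for μ < 0. For positive definite operators A₁,…,Aₙ, probability vector ω, any μ, ν < 0, and t ∈ [0,1]: (1−t)·G^μ(ω; A) + t·G^ν(ω; A) ≥ G^{(1−t)μ + tν}(ω; A). -/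
set_option maxHeartbeats 1000000
set_option synthInstance.maxHeartbeats 1000000
set_option linter.unusedSectionVars false


section Aux

namespace PMeanAux

open ContinuousLinearMap

variable {H : Type*} [NormedAddCommGroup H] [InnerProductSpace ℂ H] [CompleteSpace H]

lemma smul_nn {s : ℝ} {a : H →L[ℂ] H} (hs : 0 ≤ s) (h : 0 ≤ a) : 0 ≤ s • a := by
  have h1 : star (Real.sqrt s • (1 : H →L[ℂ] H)) = Real.sqrt s • 1 := by
    rw [star_smul, star_one, star_trivial]
  have := star_left_conjugate_nonneg h (Real.sqrt s • (1 : H →L[ℂ] H))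
  rw [h1] at this
  simpa [smul_mul_assoc, mul_smul_comm, smul_smul, Real.mul_self_sqrt hs] using this

lemma smul_mono {s : ℝ} {a b : H →L[ℂ] H} (hs : 0 ≤ s) (h : a ≤ b) : s • a ≤ s • b := by
  have := smul_nn hs (sub_nonneg.2 h)
  rwa [smul_sub, sub_nonneg] at this

lemma smul_one_le_smul_one {r s : ℝ} (h : r ≤ s) : r • (1 : H →L[ℂ] H) ≤ s • 1 := by
  have := smul_nn (sub_nonneg.2 h) (zero_le_one (α := H →L[ℂ] H))
  rw [sub_smul, sub_nonneg] at this
  simpa using this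

lemma isUnit_smul_one {s : ℝ} (hs : s ≠ 0) : IsUnit (s • (1 : H →L[ℂ] H)) := by
  refine ⟨⟨s • 1, s⁻¹ • 1, ?_, ?_⟩, rfl⟩ <;>
    rw [smul_mul_smul_comm, one_mul] <;> simp [mul_inv_cancel₀ hs, inv_mul_cancel₀ hs]

lemma posdef_one : IsPosDef (1 : H →L[ℂ] H) := ⟨isPositive_one, isUnit_one⟩

lemma posdef_nonneg {a : H →L[ℂ] H} (h : IsPosDef a) : 0 ≤ a :=
  (nonneg_iff_isPositive a).2 h.1

lemma posdef_of_le {ε : ℝ} (hε : 0 < ε) {a : H →L[ℂ] H} (h : ε • 1 ≤ a) : IsPosDef a := by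
  have h0 : (0 : H →L[ℂ] H) ≤ ε • 1 := smul_nn hε.le (zero_le_one (α := H →L[ℂ] H))
  refine ⟨(nonneg_iff_isPositive a).1 (h0.trans h), ?_⟩
  exact CStarAlgebra.isUnit_of_le _ h ⟨h0, isUnit_smul_one hε.ne'⟩

lemma ring_inverse_eq {a : H →L[ℂ] H} (h : IsUnit a) :
    Ring.inverse a = (↑h.unit⁻¹ : H →L[ℂ] H) := by
  conv_lhs => rw [← h.unit_spec]
  rw [Ring.inverse_unit]

lemma posdef_inv {a : H →L[ℂ] H} (h : IsPosDef a) : IsPosDef (Ring.inverse a) := by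
  rw [ring_inverse_eq h.2]
  have hspec : (↑h.2.unit : H →L[ℂ] H) = a := h.2.unit_spec
  have h0 : 0 ≤ (↑h.2.unit⁻¹ : H →L[ℂ] H) :=
    CFC.inv_nonneg_of_nonneg h.2.unit (by rw [hspec]; exact posdef_nonneg h)
  exact ⟨(nonneg_iff_isPositive _).1 h0, (h.2.unit⁻¹).isUnit⟩

lemma ring_inv_inv {a : H →L[ℂ] H} (h : IsUnit a) :
    Ring.inverse (Ring.inverse a) = a := by
  rw [ring_inverse_eq h, Ring.inverse_unit, inv_inv, h.unit_spec]

lemma ring_inv_le_inv {a b : H →L[ℂ] H} (ha0 : 0 ≤ a) (ha : IsUnit a) (hb : IsUnit b)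
    (h : a ≤ b) : Ring.inverse b ≤ Ring.inverse a := by
  lift a to (H →L[ℂ] H)ˣ using ha
  lift b to (H →L[ℂ] H)ˣ using hb
  rw [Ring.inverse_unit, Ring.inverse_unit]
  exact CStarAlgebra.inv_le_inv ha0 h

lemma exists_eps {a : H →L[ℂ] H} (h : IsPosDef a) : ∃ ε : ℝ, 0 < ε ∧ ε • 1 ≤ a := by
  obtain hsub | hnt := subsingleton_or_nontrivial (H →L[ℂ] H)
  · exact ⟨1, one_pos, le_of_eq (Subsingleton.elim _ _)⟩
  · set u := h.2.unit with hu
    have hua : (↑u : H →L[ℂ] H) = a := h.2.unit_spec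
    have hinv : 0 ≤ (↑u⁻¹ : H →L[ℂ] H) := CFC.inv_nonneg_of_nonneg u (by rw [hua]; exact posdef_nonneg h)
    set M := ‖(↑u⁻¹ : H →L[ℂ] H)‖ with hM
    have hM0 : 0 < M := norm_pos_iff.2 (Units.ne_zero u⁻¹)
    have hle : (↑u⁻¹ : H →L[ℂ] H) ≤ M • 1 := by
      have := IsSelfAdjoint.le_algebraMap_norm_self (a := (↑u⁻¹ : H →L[ℂ] H))
        (IsSelfAdjoint.of_nonneg hinv)
      rwa [Algebra.algebraMap_eq_smul_one] at this
    let v : (H →L[ℂ] H)ˣ := ⟨M • 1, M⁻¹ • 1,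
      by rw [smul_mul_smul_comm, one_mul, mul_inv_cancel₀ hM0.ne', one_smul],
      by rw [smul_mul_smul_comm, one_mul, inv_mul_cancel₀ hM0.ne', one_smul]⟩
    have := CStarAlgebra.inv_le_inv (a := u⁻¹) (b := v) hinv hle
    rw [inv_inv, hua] at this
    exact ⟨M⁻¹, by positivity, this⟩

lemma G_const_one (G : OrderedMean H) {n : ℕ} {w : Fin n → ℝ} (hw : IsProbVec w) :
    G.G n w (fun _ => 1) = 1 := by
  refine le_antisymm ?_ ?_
  · have := G.le_arith n w _ hw (fun _ => posdef_one)
    simpa [← Finset.sum_smul, hw.2] using this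
  · have := G.harm_le n w _ hw (fun _ => posdef_one)
    simpa [Ring.inverse_one, ← Finset.sum_smul, hw.2] using this

lemma G_const_smul (G : OrderedMean H) {n : ℕ} {w : Fin n → ℝ} (hw : IsProbVec w)
    {c : ℝ} (hc : 0 < c) : G.G n w (fun _ => c • 1) = c • 1 := by
  have := G.homog n w (fun _ => 1) c hw (fun _ => posdef_one) hc
  rw [this, G_const_one G hw]

/-- Convexity of the operator inverse, derived from the AGH inequalities of `G`. -/
lemma inv_convex (G : OrderedMean H) {X Y : H →L[ℂ] H} (hX : IsPosDef X) (hY : IsPosDef Y)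
    {t : ℝ} (ht0 : 0 ≤ t) (ht1 : t ≤ 1) :
    Ring.inverse ((1 - t) • X + t • Y) ≤
      (1 - t) • Ring.inverse X + t • Ring.inverse Y := by
  rcases eq_or_lt_of_le ht0 with rfl | ht0'
  · simp
  rcases eq_or_lt_of_le ht1 with rfl | ht1'
  · simp
  set w2 : Fin 2 → ℝ := ![1 - t, t] with hw2def
  have hw2 : IsProbVec w2 := by
    constructor
    · rw [Fin.forall_fin_two]
      constructor <;> simp [hw2def] <;> linarith
    · simp [Fin.sum_univ_two, hw2def]
  set fam : Fin 2 → (H →L[ℂ] H) := ![Ring.inverse X, Ring.inverse Y] with hfamdef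
  have hfam : ∀ i, IsPosDef (fam i) := by
    rw [Fin.forall_fin_two]
    exact ⟨posdef_inv hX, posdef_inv hY⟩
  have h1 := G.harm_le 2 w2 fam hw2 hfam
  have h2 := G.le_arith 2 w2 fam hw2 hfam
  rw [Fin.sum_univ_two] at h1 h2
  simp only [hfamdef, hw2def, Matrix.cons_val_zero, Matrix.cons_val_one, Matrix.head_cons,
    ring_inv_inv hX.2, ring_inv_inv hY.2] at h1 h2
  exact h1.trans h2

/-- key lower bound for `Φ s = G (B + s•1) - s•1`. -/
lemma phi_lower (G : OrderedMean H) {n : ℕ} {w : Fin n → ℝ} (hw : IsProbVec w)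
    {B : Fin n → (H →L[ℂ] H)} (hB : ∀ i, IsPosDef (B i))
    {ε : ℝ} (hε : 0 < ε) (hεB : ∀ i, ε • 1 ≤ B i) {s : ℝ} (hs : 0 ≤ s) :
    ε • 1 ≤ G.G n w (fun i => B i + s • 1) - s • 1 := by
  have hs1 : (0 : H →L[ℂ] H) ≤ s • 1 := smul_nn hs (zero_le_one (α := H →L[ℂ] H))
  have hlow : ∀ i, (ε + s) • 1 ≤ B i + s • 1 := fun i => by
    rw [add_smul]; exact add_le_add (hεB i) le_rfl
  have hfam : ∀ i, IsPosDef (B i + s • 1) := fun i =>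
    posdef_of_le (by linarith) (hlow i)
  have hconst : ∀ i : Fin n, IsPosDef ((ε + s) • (1 : H →L[ℂ] H)) := fun _ =>
    posdef_of_le (by linarith) le_rfl
  have hm := G.mono n w (fun i => B i + s • 1) (fun _ => (ε + s) • 1) hw hfam hconst hlow
  rw [G_const_smul G hw (by linarith)] at hm
  rw [le_sub_iff_add_le, ← add_smul]
  exact hm

end PMeanAux

end Aux

variable {H : Type*} [NormedAddCommGroup H] [InnerProductSpace ℂ H] [CompleteSpace H]

theorem pMean_param_convex_neg (G : OrderedMean H) {n : ℕ} (w : Fin n → ℝ) (hw : IsProbVec w)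
    (A : Fin n → (H →L[ℂ] H)) (hA : ∀ i, IsPosDef (A i))
    (μ ν t : ℝ) (hμ : μ < 0) (hν : ν < 0) (ht0 : 0 ≤ t) (ht1 : t ≤ 1) :
    G.pMean ((1 - t) * μ + t * ν) n w A ≤
      (1 - t) • G.pMean μ n w A + t • G.pMean ν n w A := by
  classical
  have hn : n ≠ 0 := by rintro rfl; simpa using hw.2
  have hc0 : (1 - t) * μ + t * ν < 0 := by
    rcases eq_or_lt_of_le ht0 with rfl | ht0'
    · simpa using hμ
    · have h1 : t * ν < 0 := mul_neg_of_pos_of_neg ht0' hν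
      nlinarith [mul_nonneg (sub_nonneg.2 ht1) (neg_nonneg.2 hμ.le)]
  simp only [OrderedMean.pMean]
  rw [if_neg (not_le.2 hc0), if_neg (not_le.2 hμ), if_neg (not_le.2 hν)]
  set a := -μ with ha
  set b := -ν with hb
  have ha0 : 0 < a := by rw [ha]; linarith
  have hb0 : 0 < b := by rw [hb]; linarith
  have hcc : -((1 - t) * μ + t * ν) = (1 - t) * a + t * b := by rw [ha, hb]; ring
  rw [hcc]
  set c := (1 - t) * a + t * b with hcdef
  have hc0' : 0 < c := by rw [hcdef]; nlinarith
  -- positive definiteness of the inverses and a uniform lower bound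
  have hBpd : ∀ i, IsPosDef (Ring.inverse (A i)) := fun i => PMeanAux.posdef_inv (hA i)
  choose εf hεf0 hεf1 using fun i => PMeanAux.exists_eps (hBpd i)
  have hne : (Finset.univ : Finset (Fin n)).Nonempty := by
    have : Nonempty (Fin n) := Fin.pos_iff_nonempty.1 (Nat.pos_of_ne_zero hn)
    exact Finset.univ_nonempty
  set ε := Finset.univ.inf' hne εf with hεdef
  have hε0 : 0 < ε := (Finset.lt_inf'_iff hne).2 fun i _ => hεf0 i
  have hεB : ∀ i, ε • 1 ≤ Ring.inverse (A i) := fun i =>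
    (PMeanAux.smul_one_le_smul_one (Finset.inf'_le _ (Finset.mem_univ i))).trans (hεf1 i)
  -- the three operators
  set X := G.G n w (fun i => Ring.inverse (A i) + a • 1) - a • 1 with hX
  set Y := G.G n w (fun i => Ring.inverse (A i) + b • 1) - b • 1 with hY
  set Z := G.G n w (fun i => Ring.inverse (A i) + c • 1) - c • 1 with hZ
  have hXlow : ε • 1 ≤ X := by
    rw [hX]; exact PMeanAux.phi_lower G hw hBpd hε0 hεB ha0.le
  have hYlow : ε • 1 ≤ Y := by
    rw [hY]; exact PMeanAux.phi_lower G hw hBpd hε0 hεB hb0.le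
  have hZlow : ε • 1 ≤ Z := by
    rw [hZ]; exact PMeanAux.phi_lower G hw hBpd hε0 hεB hc0'.le
  have hXpd : IsPosDef X := PMeanAux.posdef_of_le hε0 hXlow
  have hYpd : IsPosDef Y := PMeanAux.posdef_of_le hε0 hYlow
  have hZpd : IsPosDef Z := PMeanAux.posdef_of_le hε0 hZlow
  -- the convex combination
  have hWlow : ε • 1 ≤ (1 - t) • X + t • Y := by
    calc ε • (1 : H →L[ℂ] H) = (1 - t) • (ε • 1) + t • (ε • 1) := by module
    _ ≤ (1 - t) • X + t • Y :=
      add_le_add (PMeanAux.smul_mono (by linarith) hXlow) (PMeanAux.smul_mono ht0 hYlow)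
  have hWpd : IsPosDef ((1 - t) • X + t • Y) := PMeanAux.posdef_of_le hε0 hWlow
  -- parameter concavity from joint concavity of G
  have hfam : ∀ s : ℝ, 0 ≤ s → ∀ i, IsPosDef (Ring.inverse (A i) + s • 1) := fun s hs i =>
    PMeanAux.posdef_of_le hε0 ((hεB i).trans
      (le_add_of_nonneg_right (PMeanAux.smul_nn hs (zero_le_one (α := H →L[ℂ] H)))))
  have hconcave := G.concave n w (fun i => Ring.inverse (A i) + a • 1)
    (fun i => Ring.inverse (A i) + b • 1) t hw (hfam a ha0.le) (hfam b hb0.le) ht0 ht1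
  have harg : (fun i => (1 - t) • (Ring.inverse (A i) + a • 1)
      + t • (Ring.inverse (A i) + b • 1))
      = (fun i => Ring.inverse (A i) + c • 1) := by
    funext i; rw [hcdef]; module
  rw [harg] at hconcave
  have key : (1 - t) • X + t • Y ≤ Z := by
    rw [hX, hY, hZ]
    have hrearr : (1 - t) • (G.G n w (fun i => Ring.inverse (A i) + a • 1) - a • 1)
        + t • (G.G n w (fun i => Ring.inverse (A i) + b • 1) - b • 1)
        = ((1 - t) • G.G n w (fun i => Ring.inverse (A i) + a • 1)
          + t • G.G n w (fun i => Ring.inverse (A i) + b • 1)) - c • 1 := by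
      rw [hcdef]; module
    rw [hrearr]
    exact sub_le_sub_right hconcave _
  -- invert
  have h1 : Ring.inverse Z ≤ Ring.inverse ((1 - t) • X + t • Y) :=
    PMeanAux.ring_inv_le_inv (PMeanAux.posdef_nonneg hWpd) hWpd.2 hZpd.2 key
  have h2 := PMeanAux.inv_convex G hXpd hYpd ht0 ht1
  exact h1.trans h2
end

section
/- Let G be an ordered mean with parameterized means G^μ, λ ∈ Δₖ a positive probability vector, and μ₁,…,μₖ > 0. For any p ≥ 1, writing 𝔐_p(λ; μ) = (∑ⱼ λⱼμⱼ^p)^{1/p}: G^{𝔐_p(λ; μ)}(ω; A) ≥ ∑ⱼ λⱼ·G^{μⱼ}(ω; A) for any probability vector ω and positive definite operators A = (A₁,…,Aₙ). -/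
variable {H : Type*} [NormedAddCommGroup H] [InnerProductSpace ℂ H] [CompleteSpace H]

set_option synthInstance.maxHeartbeats 1000000
set_option maxHeartbeats 4000000

/-- Positive scalar multiples of Loewner-nonnegative operators are nonnegative. -/
theorem smul_nonneg_clm (s : ℝ) (hs : 0 ≤ s) (T : H →L[ℂ] H) (hT : 0 ≤ T) : 0 ≤ s • T := by
  have h := star_left_conjugate_nonneg hT ((Real.sqrt s : ℂ) • 1 : H →L[ℂ] H)
  have e : star ((Real.sqrt s : ℂ) • (1 : H →L[ℂ] H)) = (Real.sqrt s : ℂ) • 1 := by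
    rw [star_smul, star_one, Complex.star_def, Complex.conj_ofReal]
  rw [e] at h
  have e2 : ((Real.sqrt s : ℂ) • (1 : H →L[ℂ] H)) * T * ((Real.sqrt s : ℂ) • 1) = s • T := by
    rw [smul_mul_assoc, one_mul, mul_smul_comm, mul_one, smul_smul, ← Complex.ofReal_mul,
      Real.mul_self_sqrt hs]
    exact algebraMap_smul ℂ s T
  rwa [e2] at h

theorem smul_le_smul_clm {s : ℝ} (hs : 0 ≤ s) {X Y : H →L[ℂ] H} (h : X ≤ Y) :
    s • X ≤ s • Y := by
  have := smul_nonneg_clm s hs (Y - X) (sub_nonneg.mpr h)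
  rwa [smul_sub, sub_nonneg] at this

theorem smul_one_nonneg_clm {μ : ℝ} (hμ : 0 ≤ μ) : (0 : H →L[ℂ] H) ≤ μ • 1 :=
  smul_nonneg_clm μ hμ 1 zero_le_one

theorem isPosDef_add_nonneg {A C : H →L[ℂ] H} (hA : IsPosDef A) (hC : 0 ≤ C) :
    IsPosDef (A + C) := by
  refine ⟨?_, CStarAlgebra.isUnit_of_le A (le_add_of_nonneg_right hC)
    ⟨(ContinuousLinearMap.nonneg_iff_isPositive A).mpr hA.1, hA.2⟩⟩
  exact hA.1.add ((ContinuousLinearMap.nonneg_iff_isPositive C).mp hC)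

theorem isPosDef_smul {a : ℝ} (ha : 0 < a) {A : H →L[ℂ] H} (hA : IsPosDef A) :
    IsPosDef (a • A) := by
  constructor
  · rw [← ContinuousLinearMap.nonneg_iff_isPositive]
    exact smul_nonneg_clm a ha.le A ((ContinuousLinearMap.nonneg_iff_isPositive A).mpr hA.1)
  · have e : a • A = ((a : ℂ) • (1 : H →L[ℂ] H)) * A := by
      rw [smul_mul_assoc, one_mul]; exact (algebraMap_smul ℂ a A).symm
    rw [e]
    have hu : IsUnit ((a : ℂ) • (1 : H →L[ℂ] H)) := by
      rw [← Algebra.algebraMap_eq_smul_one]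
      exact (isUnit_iff_ne_zero.mpr (by exact_mod_cast ha.ne')).map (algebraMap ℂ (H →L[ℂ] H))
    exact hu.mul hA.2

theorem isPosDef_smul_one {μ : ℝ} (hμ : 0 < μ) : IsPosDef (μ • (1 : H →L[ℂ] H)) :=
  isPosDef_smul hμ ⟨ContinuousLinearMap.isPositive_one, isUnit_one⟩

theorem OrderedMean.G_one (G : OrderedMean H) {n : ℕ} (w : Fin n → ℝ) (hw : IsProbVec w) :
    G.G n w (fun _ => 1) = 1 := by
  have hpd : ∀ i : Fin n, IsPosDef ((fun _ => (1 : H →L[ℂ] H)) i) :=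
    fun _ => ⟨ContinuousLinearMap.isPositive_one, isUnit_one⟩
  have h1 := G.le_arith n w (fun _ => 1) hw hpd
  have h2 := G.harm_le n w (fun _ => 1) hw hpd
  have e : ∑ i, w i • (1 : H →L[ℂ] H) = 1 := by
    rw [← Finset.sum_smul, hw.2, one_smul]
  rw [e] at h1
  simp only [Ring.inverse_one] at h2
  rw [e, Ring.inverse_one] at h2
  exact le_antisymm h1 h2

theorem OrderedMean.G_const (G : OrderedMean H) {n : ℕ} (w : Fin n → ℝ) (hw : IsProbVec w)
    {c : ℝ} (hc : 0 < c) : G.G n w (fun _ => c • 1) = c • 1 := by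
  have := G.homog n w (fun _ => 1) c hw
    (fun _ => ⟨ContinuousLinearMap.isPositive_one, isUnit_one⟩) hc
  rw [this, G.G_one w hw]

/-- Translation superadditivity: `G(B + c·1) ≥ G(B) + c·1`. -/
theorem OrderedMean.translate (G : OrderedMean H) {n : ℕ} (w : Fin n → ℝ) (hw : IsProbVec w)
    (B : Fin n → (H →L[ℂ] H)) (hB : ∀ i, IsPosDef (B i)) {c : ℝ} (hc : 0 ≤ c) :
    G.G n w B + c • 1 ≤ G.G n w (fun i => B i + c • 1) := by
  rcases eq_or_lt_of_le hc with rfl | hc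
  · simp
  have pd1 : ∀ i, IsPosDef ((2 : ℝ) • B i) := fun i => isPosDef_smul two_pos (hB i)
  have pd2 : ∀ _ : Fin n, IsPosDef ((2 * c) • (1 : H →L[ℂ] H)) :=
    fun _ => isPosDef_smul_one (by linarith)
  have hconc := G.concave n w (fun i => (2 : ℝ) • B i) (fun _ => (2 * c) • 1) (1/2) hw pd1 pd2
    (by norm_num) (by norm_num)
  have e1 : (fun i => (1 - 1/2 : ℝ) • ((2 : ℝ) • B i) + (1/2 : ℝ) • ((2 * c) • (1 : H →L[ℂ] H)))
      = fun i => B i + c • 1 := by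
    funext i; module
  rw [e1, G.homog n w B 2 hw hB two_pos, G.G_const w hw (by linarith)] at hconc
  calc G.G n w B + c • 1
      = (1 - 1/2 : ℝ) • ((2:ℝ) • G.G n w B) + (1/2 : ℝ) • ((2 * c) • (1 : H →L[ℂ] H)) := by
        module
    _ ≤ _ := hconc

/-- Jensen / concavity in the parameter. -/
theorem OrderedMean.jensen_param (G : OrderedMean H) {n : ℕ} (w : Fin n → ℝ) (hw : IsProbVec w)
    (A : Fin n → (H →L[ℂ] H)) (hA : ∀ i, IsPosDef (A i)) :
    ∀ (k : ℕ) (l μ : Fin k → ℝ), IsProbVec l → (∀ j, 0 < μ j) →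
    ∑ j, l j • G.G n w (fun i => A i + μ j • 1) ≤
      G.G n w (fun i => A i + (∑ j, l j * μ j) • 1) := by
  intro k
  induction k with
  | zero =>
    intro l μ hl _
    exact absurd hl.2 (by simp)
  | succ k ih =>
    intro l μ hl hμ
    rcases Nat.eq_zero_or_pos k with rfl | hk
    · have h1 : l 0 = 1 := by simpa using hl.2
      simp [Fin.sum_univ_one, h1]
    · have hne : Nonempty (Fin k) := Fin.pos_iff_nonempty.mp hk
      set s := ∑ j : Fin k, l j.succ with hs
      have hspos : 0 < s :=
        Finset.sum_pos (fun j _ => hl.1 j.succ) Finset.univ_nonempty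
      have hsum : l 0 + s = 1 := by
        rw [hs]; simpa [Fin.sum_univ_succ] using hl.2
      have hl0 : 0 < l 0 := hl.1 0
      have hs1 : s ≤ 1 := by linarith
      set l' : Fin k → ℝ := fun j => l j.succ / s with hl'def
      have hl' : IsProbVec l' := by
        refine ⟨fun j => div_pos (hl.1 j.succ) hspos, ?_⟩
        rw [hl'def, ← Finset.sum_div, ← hs, div_self hspos.ne']
      have hih := ih l' (fun j => μ j.succ) hl' (fun j => hμ j.succ)
      set T : ℝ := ∑ j : Fin k, l' j * μ j.succ with hT
      have pd1 : ∀ i, IsPosDef (A i + μ 0 • (1 : H →L[ℂ] H)) :=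
        fun i => isPosDef_add_nonneg (hA i) (smul_one_nonneg_clm (hμ 0).le)
      have hTpos : 0 < T :=
        Finset.sum_pos (fun j _ => mul_pos (hl'.1 j) (hμ j.succ)) Finset.univ_nonempty
      have pd2 : ∀ i, IsPosDef (A i + T • (1 : H →L[ℂ] H)) :=
        fun i => isPosDef_add_nonneg (hA i) (smul_one_nonneg_clm hTpos.le)
      have hconc := G.concave n w (fun i => A i + μ 0 • 1) (fun i => A i + T • 1) s hw pd1 pd2
        hspos.le hs1
      have e1 : (fun i => (1 - s) • (A i + μ 0 • (1 : H →L[ℂ] H)) + s • (A i + T • 1))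
          = fun i => A i + ((1 - s) * μ 0 + s * T) • 1 := by
        funext i; module
      rw [e1] at hconc
      have e2 : (1 - s) * μ 0 + s * T = ∑ j, l j * μ j := by
        rw [Fin.sum_univ_succ]
        have : s * T = ∑ j : Fin k, l j.succ * μ j.succ := by
          rw [hT, Finset.mul_sum]
          refine Finset.sum_congr rfl fun j _ => ?_
          rw [hl'def]; field_simp
        rw [this]
        have : (1 : ℝ) - s = l 0 := by linarith
        rw [this]
      rw [e2] at hconc
      have e3 : ∑ j : Fin (k+1), l j • G.G n w (fun i => A i + μ j • 1)
          = l 0 • G.G n w (fun i => A i + μ 0 • 1)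
            + s • ∑ j : Fin k, l' j • G.G n w (fun i => A i + μ j.succ • 1) := by
        rw [Fin.sum_univ_succ, Finset.smul_sum]
        congr 1
        refine Finset.sum_congr rfl fun j _ => ?_
        rw [smul_smul, hl'def, mul_div_cancel₀ _ hspos.ne']
      rw [e3]
      calc l 0 • G.G n w (fun i => A i + μ 0 • 1)
            + s • ∑ j : Fin k, l' j • G.G n w (fun i => A i + μ j.succ • 1)
          ≤ l 0 • G.G n w (fun i => A i + μ 0 • 1)
            + s • G.G n w (fun i => A i + T • 1) := by
            exact add_le_add_right (smul_le_smul_clm hspos.le hih) _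
        _ = (1 - s) • G.G n w (fun i => A i + μ 0 • 1)
            + s • G.G n w (fun i => A i + T • 1) := by
            rw [show (1 : ℝ) - s = l 0 by linarith]
        _ ≤ _ := hconc

theorem pMean_powerMean_param (G : OrderedMean H) {n k : ℕ} (w : Fin n → ℝ)
    (l : Fin k → ℝ) (hw : IsProbVec w) (hl : IsProbVec l)
    (A : Fin n → (H →L[ℂ] H)) (hA : ∀ i, IsPosDef (A i))
    (μ : Fin k → ℝ) (hμ : ∀ j, 0 < μ j) (p : ℝ) (hp : 1 ≤ p) :
    ∑ j, l j • G.pMean (μ j) n w A ≤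
      G.pMean ((∑ j, l j * μ j ^ p) ^ (1 / p)) n w A := by
  have hk : 0 < k := by
    rcases Nat.eq_zero_or_pos k with rfl | h
    · exact absurd hl.2 (by simp)
    · exact h
  have hne : Nonempty (Fin k) := Fin.pos_iff_nonempty.mp hk
  set S : ℝ := ∑ j, l j * μ j with hSdef
  set M : ℝ := (∑ j, l j * μ j ^ p) ^ (1 / p) with hMdef
  have hS : 0 < S := Finset.sum_pos (fun j _ => mul_pos (hl.1 j) (hμ j)) Finset.univ_nonempty
  have hSM : S ≤ M :=
    Real.arith_mean_le_rpow_mean Finset.univ l μ (fun j _ => (hl.1 j).le) hl.2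
      (fun j _ => (hμ j).le) hp
  have hM0 : 0 ≤ M := hS.le.trans hSM
  have hpm : ∀ j, G.pMean (μ j) n w A = G.G n w (fun i => A i + μ j • 1) - μ j • 1 := by
    intro j
    rw [OrderedMean.pMean, if_pos (hμ j).le]
  have hpM : G.pMean M n w A = G.G n w (fun i => A i + M • 1) - M • 1 := by
    rw [OrderedMean.pMean, if_pos hM0]
  rw [hpM]
  have e1 : ∑ j, l j • G.pMean (μ j) n w A
      = (∑ j, l j • G.G n w (fun i => A i + μ j • 1)) - S • 1 := by
    rw [hSdef, Finset.sum_smul, ← Finset.sum_sub_distrib]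
    refine Finset.sum_congr rfl fun j _ => ?_
    rw [hpm j, smul_sub, smul_smul]
  rw [e1]
  have hjensen := G.jensen_param w hw A hA k l μ hl hμ
  have pdS : ∀ i, IsPosDef (A i + S • (1 : H →L[ℂ] H)) :=
    fun i => isPosDef_add_nonneg (hA i) (smul_one_nonneg_clm hS.le)
  have htrans := G.translate w hw (fun i => A i + S • 1) pdS (sub_nonneg.mpr hSM)
  have e2 : (fun i => (A i + S • (1 : H →L[ℂ] H)) + (M - S) • 1)
      = fun i => A i + M • 1 := by
    funext i; module
  rw [e2] at htrans
  have step2 : G.G n w (fun i => A i + S • 1) - S • 1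
      ≤ G.G n w (fun i => A i + M • 1) - M • 1 := by
    have : G.G n w (fun i => A i + S • 1) - S • 1
        = (G.G n w (fun i => A i + S • 1) + (M - S) • 1) - M • 1 := by module
    rw [this]
    exact sub_le_sub_right htrans _
  calc (∑ j, l j • G.G n w (fun i => A i + μ j • 1)) - S • 1
      ≤ G.G n w (fun i => A i + S • 1) - S • 1 := sub_le_sub_right hjensen _
    _ ≤ _ := step2
end

section
/- For positive real numbers μ, ν > 0, t ∈ [0,1], p ∈ [−1,1] with p ≠ 0, and K = (μ+ν)²/(4μν): (1−t)μ + tν ≤ K·((1−t)μ^p + tν^p)^{1/p}, i.e., the weighted arithmetic mean of μ and ν is at most K times their weighted p-th power mean, for all p ≥ −1. -/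
variable {H : Type*} [NormedAddCommGroup H] [InnerProductSpace ℂ H] [CompleteSpace H]

lemma concave2_rpow (a b t q : ℝ) (ha : 0 ≤ a) (hb : 0 ≤ b) (ht0 : 0 ≤ t) (ht1 : t ≤ 1)
    (hq0 : 0 < q) (hq1 : q ≤ 1) :
    (1 - t) * a ^ q + t * b ^ q ≤ ((1 - t) * a + t * b) ^ q := by
  have hp : (1:ℝ) ≤ 1 / q := (le_div_iff₀ hq0).2 (by linarith)
  have h := Real.rpow_arith_mean_le_arith_mean_rpow (Finset.univ : Finset (Fin 2))
    ![1 - t, t] ![a ^ q, b ^ q] ?_ ?_ ?_ hp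
  · simp only [Fin.sum_univ_two, Matrix.cons_val_zero, Matrix.cons_val_one, Matrix.head_cons] at h
    rw [← Real.rpow_mul ha, ← Real.rpow_mul hb, mul_one_div_cancel hq0.ne',
      Real.rpow_one, Real.rpow_one] at h
    have hX : (0:ℝ) ≤ (1 - t) * a ^ q + t * b ^ q := add_nonneg (mul_nonneg (by linarith) (Real.rpow_nonneg ha _)) (mul_nonneg ht0 (Real.rpow_nonneg hb _))
    calc (1 - t) * a ^ q + t * b ^ q
        = (((1 - t) * a ^ q + t * b ^ q) ^ (1/q)) ^ q := by
          rw [← Real.rpow_mul hX, one_div_mul_cancel hq0.ne', Real.rpow_one]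
      _ ≤ ((1 - t) * a + t * b) ^ q :=
          Real.rpow_le_rpow (Real.rpow_nonneg hX _) h hq0.le
  · intro i _; fin_cases i <;> simp <;> linarith
  · simp [Fin.sum_univ_two]
  · intro i _; fin_cases i <;> simp <;> positivity

theorem scalar_kantorovich_power (μ ν t p : ℝ) (hμ : 0 < μ) (hν : 0 < ν)
    (ht0 : 0 ≤ t) (ht1 : t ≤ 1) (hpl : -1 ≤ p) (hpu : p ≤ 1) (hp0 : p ≠ 0) :
    (1 - t) * μ + t * ν ≤
      ((μ + ν) ^ 2 / (4 * μ * ν)) * ((1 - t) * μ ^ p + t * ν ^ p) ^ (1 / p) := by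
  have pos2 : ∀ x y : ℝ, 0 < x → 0 < y → 0 < (1 - t) * x + t * y := by
    intro x y hx hy
    rcases eq_or_lt_of_le ht1 with h | h
    · subst h; simpa using hy
    · have h1 : 0 < (1 - t) * x := mul_pos (by linarith) hx
      nlinarith [mul_nonneg ht0 hy.le]
  set c : ℝ := (1 - t) * μ⁻¹ + t * ν⁻¹ with hc_def
  have hc : 0 < c := pos2 _ _ (by positivity) (by positivity)
  have hK : 0 < (μ + ν) ^ 2 / (4 * μ * ν) := by positivity
  -- Step A : Kantorovich
  have stepA : (1 - t) * μ + t * ν ≤ ((μ + ν) ^ 2 / (4 * μ * ν)) * c⁻¹ := by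
    rw [← div_eq_mul_inv, le_div_iff₀ hc, le_div_iff₀ (by positivity)]
    have e : ((1 - t) * μ + t * ν) * c * (4 * μ * ν)
        = 4 * (((1 - t) * μ + t * ν) * ((1 - t) * ν + t * μ)) := by
      rw [hc_def]; field_simp
    rw [e]
    nlinarith [sq_nonneg ((1 - t) * μ + t * ν - ((1 - t) * ν + t * μ))]
  -- Step B : harmonic mean ≤ p-th power mean
  have hW : 0 < (1 - t) * μ ^ p + t * ν ^ p :=
    pos2 _ _ (Real.rpow_pos_of_pos hμ p) (Real.rpow_pos_of_pos hν p)
  have stepB : c⁻¹ ≤ ((1 - t) * μ ^ p + t * ν ^ p) ^ (1 / p) := by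
    rcases lt_or_gt_of_ne hp0 with hp | hp
    · -- p < 0 : concavity of x ^ (-p)
      set q : ℝ := -p with hq_def
      have hq0 : 0 < q := by linarith
      have hq1 : q ≤ 1 := by linarith
      have hWq : (1 - t) * μ ^ p + t * ν ^ p = (1 - t) * (μ⁻¹) ^ q + t * (ν⁻¹) ^ q := by
        rw [hq_def, Real.inv_rpow hμ.le, Real.inv_rpow hν.le, ← Real.rpow_neg hμ.le,
          ← Real.rpow_neg hν.le, neg_neg]
      have hcon : (1 - t) * μ ^ p + t * ν ^ p ≤ c ^ q := by
        rw [hWq, hc_def]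
        exact concave2_rpow _ _ t q (by positivity) (by positivity) ht0 ht1 hq0 hq1
      have h1 : ((1 - t) * μ ^ p + t * ν ^ p) ^ (1 / q) ≤ c := by
        calc ((1 - t) * μ ^ p + t * ν ^ p) ^ (1 / q)
            ≤ (c ^ q) ^ (1 / q) := Real.rpow_le_rpow hW.le hcon (by positivity)
          _ = c := by rw [← Real.rpow_mul hc.le, mul_one_div_cancel hq0.ne', Real.rpow_one]
      have e : (1:ℝ) / p = -(1 / q) := by rw [hq_def]; field_simp
      rw [e, Real.rpow_neg hW.le]
      exact inv_anti₀ (Real.rpow_pos_of_pos hW _) h1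
    · -- 0 < p : go through the geometric mean
      have hGM : 0 < μ ^ (1 - t) * ν ^ t := by positivity
      have B1 : c⁻¹ ≤ μ ^ (1 - t) * ν ^ t := by
        have h1 : (μ ^ (1 - t) * ν ^ t)⁻¹ ≤ c := by
          rw [mul_inv, ← Real.inv_rpow hμ.le, ← Real.inv_rpow hν.le, hc_def]
          exact Real.geom_mean_le_arith_mean2_weighted (by linarith) ht0
            (by positivity) (by positivity) (by ring)
        calc c⁻¹ ≤ ((μ ^ (1 - t) * ν ^ t)⁻¹)⁻¹ := inv_anti₀ (by positivity) h1
          _ = μ ^ (1 - t) * ν ^ t := inv_inv _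
      have B2 : μ ^ (1 - t) * ν ^ t ≤ ((1 - t) * μ ^ p + t * ν ^ p) ^ (1 / p) := by
        have hGMp : (μ ^ (1 - t) * ν ^ t) ^ p = (μ ^ p) ^ (1 - t) * (ν ^ p) ^ t := by
          rw [Real.mul_rpow (by positivity) (by positivity), ← Real.rpow_mul hμ.le,
            ← Real.rpow_mul hν.le, ← Real.rpow_mul hμ.le, ← Real.rpow_mul hν.le,
            mul_comm (1 - t) p, mul_comm t p]
        have hg : (μ ^ (1 - t) * ν ^ t) ^ p ≤ (1 - t) * μ ^ p + t * ν ^ p := by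
          rw [hGMp]
          exact Real.geom_mean_le_arith_mean2_weighted (by linarith) ht0
            (by positivity) (by positivity) (by ring)
        calc μ ^ (1 - t) * ν ^ t
            = ((μ ^ (1 - t) * ν ^ t) ^ p) ^ (1 / p) := by
              rw [← Real.rpow_mul hGM.le, mul_one_div_cancel hp.ne', Real.rpow_one]
          _ ≤ ((1 - t) * μ ^ p + t * ν ^ p) ^ (1 / p) :=
              Real.rpow_le_rpow (by positivity) hg (by positivity)
      exact B1.trans B2
  calc (1 - t) * μ + t * ν ≤ ((μ + ν) ^ 2 / (4 * μ * ν)) * c⁻¹ := stepA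
    _ ≤ ((μ + ν) ^ 2 / (4 * μ * ν)) * ((1 - t) * μ ^ p + t * ν ^ p) ^ (1 / p) :=
        mul_le_mul_of_nonneg_left stepB hK.le
end
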